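/- arXiv:2510.05944 — 9 statements merged into one kernel-verified Lean document; each statement's English description precedes it below -/
import Mathlib

section
/- Let G be a finite simple graph with vertex set V and let f : V → ℝ≥0 be a function that is not identically zero. Then f is unimodal on G if and only if the support supp(f) = {v ∈ V | f(v) > 0} induces a tree in G and, for some vertex v_max ∈ supp(f) at which f attains its maximum value, f is non-increasing away from v_max within the support tree: for every pair of vertices u, w ∈ supp(f) such that u lies on the unique path from v_max to w in the induced tree, one has f(u) ≥ f(w). -/
open SimpleGraph

/-- A set of vertices induces a tree in `G`. -/
def InducesTree {V : Type*} (G : SimpleGraph V) (S : Set V) : Prop :=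
  (G.induce S).IsTree

/-- `f` is unimodal on `G`: every positive superlevel set is empty or induces a tree. -/
def UnimodalOn {V : Type*} (G : SimpleGraph V) (f : V → NNReal) : Prop :=
  ∀ c : NNReal, 0 < c → {v | c ≤ f v} = ∅ ∨ InducesTree G {v | c ≤ f v}

/-- Transfer a walk whose support lies in `S` to a walk in the induced graph on `S`. -/
def walkToInduce {V : Type*} {G : SimpleGraph V} {S : Set V} :
    ∀ {u w : V} (p : G.Walk u w) (h : ∀ x ∈ p.support, x ∈ S),
      (G.induce S).Walk ⟨u, h u p.start_mem_support⟩ ⟨w, h w p.end_mem_support⟩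
  | _, _, SimpleGraph.Walk.nil, _ => SimpleGraph.Walk.nil
  | _, _, SimpleGraph.Walk.cons hadj q, h =>
      SimpleGraph.Walk.cons (by simpa using hadj)
        (walkToInduce q (fun x hx => h x (by simp [hx])))

/-- Characterization of unimodal functions on a finite graph: a not-identically-zero `f`
is unimodal iff its support induces a tree and, for some vertex `v_max` of the support at
which `f` attains its maximum value, `f` is non-increasing away from `v_max` within the
support tree. -/
theorem unimodal_iff_support_tree_and_nonincreasing
    {V : Type*} [Fintype V] (G : SimpleGraph V)
    (f : V → NNReal) (hf : f ≠ 0) :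
    UnimodalOn G f ↔
      (InducesTree G {v | 0 < f v} ∧
        ∃ vmax : {v | 0 < f v},
          (∀ v, f v ≤ f (vmax : V)) ∧
          ∀ (w : {v | 0 < f v}) (p : (G.induce {v | 0 < f v}).Walk vmax w),
            p.IsPath → ∀ u ∈ p.support, f (w : V) ≤ f (u : V)) := by
  classical
  have hne : ∃ v, 0 < f v := by
    by_contra h
    push_neg at h
    exact hf (funext fun v => le_antisymm (h v) zero_le)
  obtain ⟨v0, hv0⟩ := hne
  constructor
  · intro hU
    -- support induces a tree, using the minimal positive value
    set s : Finset V := Finset.univ.filter (fun v => 0 < f v) with hs_def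
    have hs : s.Nonempty := ⟨v0, by simp [hs_def, hv0]⟩
    set c : NNReal := s.inf' hs f with hc_def
    have hcpos : 0 < c := by
      rw [hc_def, Finset.lt_inf'_iff]
      intro i hi
      simpa [hs_def] using hi
    have hset : {v | c ≤ f v} = {v | 0 < f v} := by
      ext v
      constructor
      · intro hv
        exact lt_of_lt_of_le hcpos hv
      · intro hv
        exact Finset.inf'_le f (by simp only [hs_def, Finset.mem_filter, Finset.mem_univ, true_and]; exact hv)
    have hTree : InducesTree G {v | 0 < f v} := by
      rcases hU c hcpos with hemp | ht
      · exfalso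
        have : v0 ∈ {v | c ≤ f v} := by
          rw [hset]; exact hv0
        simp [hemp] at this
      · rwa [hset] at ht
    refine ⟨hTree, ?_⟩
    obtain ⟨vm, -, hvm⟩ := Finset.exists_max_image Finset.univ f ⟨v0, Finset.mem_univ v0⟩
    have hvm' : ∀ v, f v ≤ f vm := fun v => hvm v (Finset.mem_univ v)
    have hvmpos : 0 < f vm := lt_of_lt_of_le hv0 (hvm' v0)
    refine ⟨⟨vm, hvmpos⟩, hvm', ?_⟩
    intro w p hp u hu
    by_contra hlt
    push_neg at hlt
    have hwpos : (0 : NNReal) < f (w : V) := w.2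
    -- superlevel set at f w
    have hnonempty : (w : V) ∈ {v | f (w : V) ≤ f v} := by
      simp only [Set.mem_setOf_eq, le_refl]
    rcases hU (f (w : V)) hwpos with hemp | ht
    · rw [hemp] at hnonempty; exact hnonempty
    · have hsub : {v | f (w : V) ≤ f v} ⊆ {v | 0 < f v} := fun x hx =>
        lt_of_lt_of_le hwpos hx
      have hvmS : vm ∈ {v | f (w : V) ≤ f v} := hvm' _
      obtain ⟨q⟩ := ht.isConnected.preconnected ⟨vm, hvmS⟩ ⟨(w : V), hnonempty⟩
      -- map to the induced graph on the support
      let q' := q.map (G.induceHomOfLE hsub).toHom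
      have he1 : (G.induceHomOfLE hsub) ⟨vm, hvmS⟩ = (⟨vm, hvmpos⟩ : {v | 0 < f v}) :=
        Subtype.ext rfl
      have he2 : (G.induceHomOfLE hsub) ⟨(w : V), hnonempty⟩ = w := Subtype.ext rfl
      let q'' := q'.copy he1 he2
      -- uniqueness of paths in the support tree
      have huniq := isAcyclic_iff_path_unique.mp hTree.IsAcyclic
        (p := ⟨p, hp⟩) (q := q''.toPath)
      have hsup : u ∈ q''.support :=
        q''.support_toPath_subset (by rw [← huniq]; exact hu)
      -- every vertex of q'' has value ≥ f w
      have : f (w : V) ≤ f (u : V) := by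
        have hsup' : u ∈ q'.support := by
          rw [← SimpleGraph.Walk.support_copy q' he1 he2]; exact hsup
        rw [SimpleGraph.Walk.support_map] at hsup'
        obtain ⟨x, hx, hxu⟩ := List.mem_map.mp hsup'
        have : f (x : V) = f (u : V) := by
          rw [← hxu]; rfl
        rw [← this]
        exact x.2
      exact absurd this (not_le.mpr hlt)
  · rintro ⟨hTree, vmax, hmax, hmono⟩ c hc
    by_cases hempty : {v | c ≤ f v} = ∅
    · exact Or.inl hempty
    · right
      obtain ⟨v1, hv1⟩ := Set.nonempty_iff_ne_empty.mpr hempty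
      have hsub : {v | c ≤ f v} ⊆ {v | 0 < f v} := fun x hx => lt_of_lt_of_le hc hx
      have hvmaxS : c ≤ f (vmax : V) := le_trans hv1 (hmax v1)
      -- connectivity: every vertex of the superlevel set is reachable from vmax
      have key : ∀ a : {v | c ≤ f v},
          (G.induce {v | c ≤ f v}).Reachable ⟨(vmax : V), hvmaxS⟩ a := by
        intro a
        obtain ⟨q⟩ := hTree.isConnected.preconnected vmax ⟨(a : V), hsub a.2⟩
        set p := q.toPath with hp_def
        have hmono' := hmono ⟨(a : V), hsub a.2⟩ p.1 p.2
        -- the walk in G obtained by forgetting the subtype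
        let valHom : G.induce {v | 0 < f v} →g G :=
          ⟨Subtype.val, fun h => h⟩
        let r := (p : (G.induce {v | 0 < f v}).Walk vmax ⟨(a : V), hsub a.2⟩).map valHom
        have hr : ∀ x ∈ r.support, x ∈ {v | c ≤ f v} := by
          intro x hx
          rw [SimpleGraph.Walk.support_map] at hx
          obtain ⟨y, hy, hyx⟩ := List.mem_map.mp hx
          have : f (y : V) = f x := by rw [← hyx]; rfl
          have h1 : c ≤ f (a : V) := a.2
          have h2 : f (a : V) ≤ f (y : V) := hmono' y hy
          rw [Set.mem_setOf_eq, ← this]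
          exact le_trans h1 h2
        exact ⟨(walkToInduce r hr).copy (Subtype.ext rfl) (Subtype.ext rfl)⟩
      haveI : Nonempty {v | c ≤ f v} := ⟨⟨v1, hv1⟩⟩
      constructor
      · exact ⟨fun a b => (key a).symm.trans (key b)⟩
      · intro v cyc hcyc
        have hinj : Function.Injective ⇑(G.induceHomOfLE hsub).toHom :=
          fun a b h => (G.induceHomOfLE hsub).injective h
        exact hTree.IsAcyclic (cyc.map (G.induceHomOfLE hsub).toHom) (hcyc.map hinj)
end

section
/- Let G = (V, E) be a finite simple graph, let k ≥ 1, and let G̃ be the join of G with the complete graph on a set W of k new vertices. If G admits a proper k-coloring, then there exist k unimodal functions f_1, …, f_k on G̃ such that Σ_{i=1}^{k} f_i(x) = 1 for every vertex x of G̃; that is, the constant function 1 on G̃ has a unimodal decomposition into k components. -/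
open SimpleGraph

/-- Join of `G` with the complete graph on `k` new vertices. -/
def augGraph {V : Type*} (G : SimpleGraph V) (k : ℕ) : SimpleGraph (V ⊕ Fin k) where
  Adj x y :=
    match x, y with
    | Sum.inl u, Sum.inl v => G.Adj u v
    | Sum.inl _, Sum.inr _ => True
    | Sum.inr _, Sum.inl _ => True
    | Sum.inr i, Sum.inr j => i ≠ j
  symm := by
    constructor
    rintro (u | i) (v | j) h
    · exact G.adj_symm h
    · trivial
    · trivial
    · exact Ne.symm h
  loopless := by
    constructor
    rintro (u | i) h
    · exact G.irrefl h
    · exact h rfl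


lemma star_isTree {α : Type*} (H : SimpleGraph α) (w : α)
    (hadj : ∀ a b, H.Adj a b ↔ ((a = w ∧ b ≠ w) ∨ (b = w ∧ a ≠ w))) :
    H.IsTree := by
  have reach : ∀ a, H.Reachable a w := by
    intro a
    by_cases h : a = w
    · exact h ▸ Reachable.refl _
    · exact Adj.reachable ((hadj a w).2 (Or.inr ⟨rfl, h⟩))
  constructor
  · haveI : Nonempty α := ⟨w⟩
    exact ⟨fun a b => (reach a).trans (reach b).symm⟩
  · intro v p hp
    have h3 := hp.three_le_length
    have hnd := hp.support_nodup
    cases p with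
    | nil => simp at h3
    | cons h q =>
      cases q with
      | nil => simp at h3
      | cons h' r =>
        cases r with
        | nil => simp at h3
        | cons h'' s =>
          rename_i b c d
          -- p.support = v :: b :: c :: s.support
          simp [Walk.support_cons] at hnd
          rcases (hadj v b).1 h with ⟨hv, hb⟩ | ⟨hb, hv⟩
          · -- v = w, b ≠ w; then c = w = v, and v = end of s ∈ s.support
            have hc : c = w := by
              rcases (hadj b c).1 h' with ⟨h1, _⟩ | ⟨h1, _⟩
              · exact absurd h1 hb
              · exact h1
            exact hnd.2.1 (hc.trans hv.symm ▸ Walk.end_mem_support s)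
          · -- b = w, v ≠ w; then c ≠ w, d = w = b, b ∈ s.support
            have hcw : c ≠ w := by
              rcases (hadj b c).1 h' with ⟨_, h2⟩ | ⟨_, h2⟩
              · exact h2
              · exact absurd hb h2
            have hd : d = w := by
              rcases (hadj c d).1 h'' with ⟨h1, _⟩ | ⟨h1, _⟩
              · exact absurd h1 hcw
              · exact h1
            exact hnd.1.2 (by rw [hb, ← hd]; exact Walk.start_mem_support s)

/-- If `G` admits a proper `k`-coloring, then the constant function `1` on the join of
`G` with the complete graph on `k` new vertices has a unimodal decomposition into `k`
components. -/
theorem colorable_imp_unimodal_decomposition_of_one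
    {V : Type*} [Fintype V] (G : SimpleGraph V) (k : ℕ) (hk : 1 ≤ k)
    (hcol : G.Colorable k) :
    ∃ f : Fin k → (V ⊕ Fin k) → NNReal,
      (∀ i, UnimodalOn (augGraph G k) (f i)) ∧
      ∀ x : V ⊕ Fin k, ∑ i, f i x = 1 := by
  classical
  obtain ⟨C⟩ := hcol
  refine ⟨fun i => Sum.elim (fun v => if C v = i then 1 else 0)
      (fun j => if j = i then 1 else 0), ?_, ?_⟩
  · intro i c hc
    set f : (V ⊕ Fin k) → NNReal := Sum.elim (fun v => if C v = i then 1 else 0)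
      (fun j => if j = i then 1 else 0) with hf
    by_cases hc1 : c ≤ 1
    · right
      have hmem : ∀ x : V ⊕ Fin k, x ∈ {v | c ≤ f v} ↔
          (x = Sum.inr i ∨ ∃ v, x = Sum.inl v ∧ C v = i) := by
        rintro (v | j)
        · simp only [Set.mem_setOf_eq, hf, Sum.elim_inl]
          constructor
          · intro hx
            by_cases h : C v = i
            · exact Or.inr ⟨v, rfl, h⟩
            · simp [h] at hx; exact absurd hx hc.ne'
          · rintro (h | ⟨u, hu, hcu⟩)
            · exact absurd h (by simp)
            · obtain rfl : u = v := by injection hu.symm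
              simp [hcu, hc1]
        · simp only [Set.mem_setOf_eq, hf, Sum.elim_inr]
          constructor
          · intro hx
            by_cases h : j = i
            · exact Or.inl (by rw [h])
            · simp [h] at hx; exact absurd hx hc.ne'
          · rintro (h | ⟨u, hu, _⟩)
            · obtain rfl : j = i := by injection h
              simp [hc1]
            · exact absurd hu (by simp)
      have hwmem : (Sum.inr i : V ⊕ Fin k) ∈ {v | c ≤ f v} := (hmem _).2 (Or.inl rfl)
      refine star_isTree _ ⟨Sum.inr i, hwmem⟩ ?_
      rintro ⟨a, ha⟩ ⟨b, hb⟩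
      have ha' := (hmem a).1 ha
      have hb' := (hmem b).1 hb
      constructor
      · intro hadj
        rcases ha' with rfl | ⟨u, rfl, hcu⟩ <;> rcases hb' with rfl | ⟨v, rfl, hcv⟩
        · exact absurd (by exact hadj) (by simp [augGraph])
        · exact Or.inl ⟨rfl, by simp⟩
        · exact Or.inr ⟨rfl, by simp⟩
        · have : G.Adj u v := hadj
          exact absurd (hcu.trans hcv.symm) (C.valid this)
      · rintro (⟨h1, h2⟩ | ⟨h1, h2⟩)
        · obtain rfl : a = Sum.inr i := congrArg Subtype.val h1
          rcases hb' with rfl | ⟨v, rfl, _⟩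
          · exact absurd rfl (fun h => h2 (Subtype.ext h))
          · show (augGraph G k).Adj (Sum.inr i) (Sum.inl v); trivial
        · obtain rfl : b = Sum.inr i := congrArg Subtype.val h1
          rcases ha' with rfl | ⟨v, rfl, _⟩
          · exact absurd rfl (fun h => h2 (Subtype.ext h))
          · show (augGraph G k).Adj (Sum.inl v) (Sum.inr i); trivial
    · left
      push_neg at hc1
      ext x
      simp only [Set.mem_setOf_eq, Set.mem_empty_iff_false, iff_false, not_le]
      calc f x ≤ 1 := by rcases x with v | j <;> simp [hf] <;> split <;> simp
        _ < c := hc1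
  · rintro (v | j) <;> simp [Finset.sum_ite_eq]
end

section
/- Let G = (V, E) be a finite simple graph, let k ≥ 1, and let G̃ be the join of G with the complete graph on a set W of k new vertices. If the vertex set V ⊔ W of G̃ can be covered by k subsets Ṽ_1, …, Ṽ_k (not necessarily disjoint), each of which induces a tree in G̃, then G admits a proper k-coloring. -/
open SimpleGraph

/-- An acyclic connected graph has no triangles. -/
lemma tree_no_triangle {W : Type*} {G : SimpleGraph W} (h : G.IsTree)
    {a b c : W} (hab : G.Adj a b) (hbc : G.Adj b c) (hac : G.Adj a c) : False := by
  have h1 : (Walk.cons hac Walk.nil : G.Walk a c).IsPath := by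
    simp [Walk.isPath_def, hac.ne]
  have h2 : (Walk.cons hab (Walk.cons hbc Walk.nil) : G.Walk a c).IsPath := by
    simp [Walk.isPath_def, hab.ne, hbc.ne, hac.ne]
  obtain ⟨p, _, hu⟩ := h.existsUnique_path a c
  have := (hu _ h1).trans (hu _ h2).symm
  simpa using congrArg Walk.length this

/-- A tree is 2-colorable. -/
lemma tree_colorable_two {W : Type*} {G : SimpleGraph W} (h : G.IsTree) :
    G.Colorable 2 := by
  obtain ⟨r⟩ := h.isConnected.nonempty
  have hP : ∀ v, ∃! p : G.Walk r v, p.IsPath := h.existsUnique_path r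
  classical
  refine ⟨Coloring.mk (fun v => ⟨(hP v).choose.length % 2, Nat.mod_lt _ (by norm_num)⟩) ?_⟩
  intro u v huv hEq
  have hu := (hP u).choose_spec.1
  have hv := (hP v).choose_spec.1
  set pu := (hP u).choose with hpu
  set pv := (hP v).choose with hpv
  have key : pv.length = pu.length + 1 ∨ pu.length = pv.length + 1 := by
    by_cases hmem : u ∈ pv.support
    · left
      have ht : (pv.takeUntil u hmem).IsPath := hv.takeUntil hmem
      have hteq : pv.takeUntil u hmem = pu := ((hP u).choose_spec.2 _ ht).symm ▸ rfl
      have hd : (pv.dropUntil u hmem).IsPath := hv.dropUntil hmem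
      have hsingle : (Walk.cons huv Walk.nil : G.Walk u v).IsPath := by
        simp [Walk.isPath_def, huv.ne]
      obtain ⟨q, _, hq⟩ := h.existsUnique_path u v
      have hde : pv.dropUntil u hmem = Walk.cons huv Walk.nil :=
        (hq _ hd).trans (hq _ hsingle).symm
      have := congrArg Walk.length (pv.take_spec hmem)
      rw [Walk.length_append, hteq, hde] at this
      simpa using this.symm
    · right
      have hrev : (Walk.cons huv pv.reverse : G.Walk u r).IsPath := by
        refine Walk.IsPath.cons hv.reverse ?_
        simpa using hmem
      have : (Walk.cons huv pv.reverse).reverse = pu :=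
        (hP u).unique hrev.reverse hu
      have := congrArg Walk.length this
      simpa [Nat.add_comm] using this.symm
  have h2 : pu.length % 2 = pv.length % 2 := by
    simpa using congrArg Fin.val hEq
  rcases key with hk | hk <;> omega

/-- If the vertex set of the join of `G` with the complete graph on `k` new vertices can
be covered by `k` subsets, each inducing a tree, then `G` admits a proper `k`-coloring. -/
theorem colorable_of_tree_cover
    {V : Type*} [Fintype V] (G : SimpleGraph V) (k : ℕ) (hk : 1 ≤ k)
    (Vs : Fin k → Set (V ⊕ Fin k))
    (htree : ∀ i, InducesTree (augGraph G k) (Vs i))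
    (hcover : (⋃ i, Vs i) = Set.univ) :
    G.Colorable k := by
  classical
  have hex : ∀ x : V ⊕ Fin k, ∃ i, x ∈ Vs i := by
    intro x
    have : x ∈ ⋃ i, Vs i := hcover.symm ▸ Set.mem_univ x
    exact Set.mem_iUnion.mp this
  choose ι hι using hex
  -- no triangle inside any part
  have htri : ∀ i (a b c : V ⊕ Fin k), a ∈ Vs i → b ∈ Vs i → c ∈ Vs i →
      (augGraph G k).Adj a b → (augGraph G k).Adj b c → (augGraph G k).Adj a c → False := by
    intro i a b c ha hb hc hab hbc hac
    exact tree_no_triangle (htree i) (a := ⟨a, ha⟩) (b := ⟨b, hb⟩) (c := ⟨c, hc⟩) hab hbc hac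
  set Wf : Fin k → Finset (Fin k) :=
    fun i => Finset.univ.filter (fun j => Sum.inr j ∈ Vs i) with hWf
  have hWmem : ∀ i j, j ∈ Wf i ↔ Sum.inr j ∈ Vs i := by intro i j; simp [hWf]
  -- a part with ≥ 2 special vertices contains nothing else
  have hlone : ∀ i, 2 ≤ (Wf i).card → ∀ w : V, Sum.inl w ∉ Vs i := by
    intro i h2 w hw
    obtain ⟨j1, hj1, j2, hj2, hne⟩ := Finset.one_lt_card.mp h2
    exact htri i (Sum.inl w) (Sum.inr j1) (Sum.inr j2) hw ((hWmem _ _).mp hj1)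
      ((hWmem _ _).mp hj2) trivial hne trivial
  -- no part contains ≥ 3 special vertices
  have hcard2 : ∀ i, (Wf i).card ≤ 2 := by
    intro i
    by_contra hlt
    push_neg at hlt
    obtain ⟨a, ha, b, hb, c, hc, hab, hac, hbc⟩ := Finset.two_lt_card.mp hlt
    exact htri i (Sum.inr a) (Sum.inr b) (Sum.inr c) ((hWmem _ _).mp ha) ((hWmem _ _).mp hb)
      ((hWmem _ _).mp hc) hab hbc hac
  set T : Finset (Fin k) := Finset.univ.filter (fun i => (Wf i).card = 0) with hT
  set B : Finset (Fin k) := Finset.univ.filter (fun i => 2 ≤ (Wf i).card) with hB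
  have hBnotT : ∀ i, i ∈ B → i ∉ T := by
    intro i hiB hiT
    have h1 := (Finset.mem_filter.mp hiB).2
    have h2 := (Finset.mem_filter.mp hiT).2
    omega
  -- counting: |T| ≤ |B|
  have hTcard : T.card ≤ B.card := by
    set B' : Finset (Fin k) := Finset.univ.filter (fun i => ¬ 2 ≤ (Wf i).card) with hB'
    have hTB' : T ⊆ B' := by
      intro i hi
      have := (Finset.mem_filter.mp hi).2
      exact Finset.mem_filter.mpr ⟨Finset.mem_univ _, by omega⟩
    have h1 : k ≤ ∑ i, (Wf i).card := by
      calc k = (Finset.univ : Finset (Fin k)).card := by simp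
        _ ≤ (Finset.univ.biUnion Wf).card := by
            refine Finset.card_le_card ?_
            intro j _
            exact Finset.mem_biUnion.mpr
              ⟨ι (Sum.inr j), Finset.mem_univ _, (hWmem _ _).mpr (hι _)⟩
        _ ≤ ∑ i, (Wf i).card := Finset.card_biUnion_le
    have hsplit : ∑ i ∈ B, (Wf i).card + ∑ i ∈ B', (Wf i).card = ∑ i, (Wf i).card :=
      Finset.sum_filter_add_sum_filter_not _ _ _
    have h2 : ∑ i ∈ B, (Wf i).card ≤ 2 * B.card := by
      calc ∑ i ∈ B, (Wf i).card ≤ ∑ _i ∈ B, 2 := Finset.sum_le_sum (fun i _ => hcard2 i)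
        _ = 2 * B.card := by rw [Finset.sum_const]; ring
    have h3 : ∑ i ∈ B', (Wf i).card ≤ (B' \ T).card := by
      calc ∑ i ∈ B', (Wf i).card = ∑ i ∈ B' \ T, (Wf i).card := by
            refine (Finset.sum_subset Finset.sdiff_subset ?_).symm
            intro i hi hni
            have hiT : i ∈ T := by
              by_contra hx
              exact hni (Finset.mem_sdiff.mpr ⟨hi, hx⟩)
            exact (Finset.mem_filter.mp hiT).2
        _ ≤ ∑ _i ∈ B' \ T, 1 := Finset.sum_le_sum (fun i hi => by
            have := (Finset.mem_filter.mp (Finset.mem_sdiff.mp hi).1).2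
            omega)
        _ = (B' \ T).card := by simp
    have h4 : (B' \ T).card = B'.card - T.card := Finset.card_sdiff_of_subset hTB'
    have h5 : T.card ≤ B'.card := Finset.card_le_card hTB'
    have h6 : B.card + B'.card = k := by
      have := Finset.card_filter_add_card_filter_not
        (s := (Finset.univ : Finset (Fin k))) (p := fun i => 2 ≤ (Wf i).card)
      simpa [hB, hB'] using this
    omega
  obtain ⟨φ⟩ : Nonempty ({i // i ∈ T} ↪ {i // i ∈ B}) := by
    apply Function.Embedding.nonempty_of_card_le
    simpa [Fintype.card_coe] using hTcard
  -- a 2-coloring of each part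
  have C : ∀ i, ((augGraph G k).induce (Vs i)).Coloring (Fin 2) :=
    fun i => (tree_colorable_two (htree i)).some
  have ctrans : ∀ {i i' : Fin k} (_ : i = i') {x : V ⊕ Fin k} (hx : x ∈ Vs i)
      (hx' : x ∈ Vs i'), C i ⟨x, hx⟩ = C i' ⟨x, hx'⟩ := by
    rintro i i' rfl x hx hx'
    rfl
  have keyC : ∀ (i : Fin k) {a b : V} (h1 : Sum.inl a ∈ Vs i) (h2 : Sum.inl b ∈ Vs i),
      G.Adj a b → C i ⟨Sum.inl a, h1⟩ ≠ C i ⟨Sum.inl b, h2⟩ := by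
    intro i a b h1 h2 hab
    exact (C i).valid hab
  have fin2 : ∀ x : Fin 2, x ≠ 0 → x = 1 := by decide
  refine ⟨Coloring.mk (fun v => if hT' : ι (Sum.inl v) ∈ T then
      (if C (ι (Sum.inl v)) ⟨Sum.inl v, hι (Sum.inl v)⟩ = 0 then ι (Sum.inl v)
       else (φ ⟨ι (Sum.inl v), hT'⟩ : {i // i ∈ B}).1)
    else ι (Sum.inl v)) ?_⟩
  intro u v huv hEq
  have memu : Sum.inl u ∈ Vs (ι (Sum.inl u)) := hι _
  have memv : Sum.inl v ∈ Vs (ι (Sum.inl v)) := hι _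
  by_cases hu : ι (Sum.inl u) ∈ T <;> by_cases hv : ι (Sum.inl v) ∈ T
  · rw [dif_pos hu, dif_pos hv] at hEq
    split_ifs at hEq with hcu hcv hcv
    · -- both color 0 : hEq : ι (inl u) = ι (inl v)
      have memu' : Sum.inl u ∈ Vs (ι (Sum.inl v)) := hEq ▸ memu
      have h0u : C (ι (Sum.inl v)) ⟨Sum.inl u, memu'⟩ = 0 :=
        (ctrans hEq memu memu').symm.trans hcu
      exact keyC _ memu' memv huv (h0u.trans hcv.symm)
    · -- u color 0, v color ≠ 0 : hEq : ι (inl u) = ↑(φ ⟨ι (inl v), hv⟩)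
      have hmem : (φ ⟨ι (Sum.inl v), hv⟩ : {i // i ∈ B}).1 ∈ B := (φ _).2
      rw [← hEq] at hmem
      exact hBnotT _ hmem hu
    · -- u color ≠ 0, v color 0 : hEq : ↑(φ ⟨ι (inl u), hu⟩) = ι (inl v)
      have hmem : (φ ⟨ι (Sum.inl u), hu⟩ : {i // i ∈ B}).1 ∈ B := (φ _).2
      rw [hEq] at hmem
      exact hBnotT _ hmem hv
    · -- both color ≠ 0
      have hsub : (⟨ι (Sum.inl u), hu⟩ : {i // i ∈ T}) = ⟨ι (Sum.inl v), hv⟩ :=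
        φ.injective (Subtype.ext hEq)
      have hii : ι (Sum.inl u) = ι (Sum.inl v) := congrArg Subtype.val hsub
      have memu' : Sum.inl u ∈ Vs (ι (Sum.inl v)) := hii ▸ memu
      have h1u : C (ι (Sum.inl v)) ⟨Sum.inl u, memu'⟩ = 1 := by
        rw [(ctrans hii memu memu').symm]
        exact fin2 _ hcu
      have h1v : C (ι (Sum.inl v)) ⟨Sum.inl v, memv⟩ = 1 := fin2 _ hcv
      exact keyC _ memu' memv huv (h1u.trans h1v.symm)
  · rw [dif_pos hu, dif_neg hv] at hEq
    split_ifs at hEq with hcu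
    · -- hEq : ι (inl u) = ι (inl v)
      rw [hEq] at hu
      exact hv hu
    · -- hEq : ↑(φ ⟨ι (inl u), hu⟩) = ι (inl v)
      have hBv : ι (Sum.inl v) ∈ B := hEq ▸ (φ _).2
      exact hlone _ (Finset.mem_filter.mp hBv).2 v memv
  · rw [dif_neg hu, dif_pos hv] at hEq
    split_ifs at hEq with hcv
    · -- hEq : ι (inl u) = ι (inl v)
      rw [← hEq] at hv
      exact hu hv
    · -- hEq : ι (inl u) = ↑(φ ⟨ι (inl v), hv⟩)
      have hBu : ι (Sum.inl u) ∈ B := hEq ▸ (φ _).2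
      exact hlone _ (Finset.mem_filter.mp hBu).2 u memu
  · rw [dif_neg hu, dif_neg hv] at hEq
    have memv' : Sum.inl v ∈ Vs (ι (Sum.inl u)) := hEq ▸ memv
    have hne : (Wf (ι (Sum.inl u))).card ≠ 0 := by
      intro h0
      exact hu (Finset.mem_filter.mpr ⟨Finset.mem_univ _, h0⟩)
    obtain ⟨j, hj⟩ := Finset.card_ne_zero.mp hne |> Finset.Nonempty.exists_mem
    exact htri (ι (Sum.inl u)) (Sum.inl u) (Sum.inr j) (Sum.inl v) memu
      ((hWmem _ _).mp hj) memv' trivial trivial huv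
end

section
/- Let G = (V, E) be a finite simple graph, let k ≥ 1, and let G̃ be the join of G with the complete graph on a set W of k new vertices. Then G admits a proper k-coloring if and only if the vertex set V ⊔ W of G̃ can be covered by k subsets (not necessarily disjoint), each of which induces a tree in G̃. -/
open SimpleGraph

lemma acyclic_no_triangle {X : Type*} {H : SimpleGraph X} (hH : H.IsAcyclic)
    {a b c : X} (hab : H.Adj a b) (hbc : H.Adj b c) (hac : H.Adj a c) : False := by
  have hp1 : (Walk.cons hab (Walk.cons hbc Walk.nil) : H.Walk a c).IsPath := by
    simp only [Walk.isPath_def, Walk.support_cons, Walk.support_nil, List.nodup_cons,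
      List.mem_cons, List.mem_singleton, List.nodup_nil, and_true, List.not_mem_nil, or_false,
      not_or]
    exact ⟨⟨hab.ne, hac.ne⟩, hbc.ne, not_false⟩
  have hp2 : (Walk.cons hac Walk.nil : H.Walk a c).IsPath := by simp [hac.ne]
  have h := hH.path_unique ⟨_, hp1⟩ ⟨_, hp2⟩
  have hlen := congrArg (fun q : H.Path a c => q.1.length) h
  simp at hlen

lemma isTree_colorable {X : Type*} {H : SimpleGraph X} (h : H.IsTree) :
    Nonempty (H.Coloring Bool) := by
  classical
  obtain ⟨r⟩ := h.isConnected.nonempty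
  choose p hp hup using h.existsUnique_path r
  refine ⟨Coloring.mk (fun v => decide (Even (p v).length)) ?_⟩
  intro u v hadj heq
  simp only [decide_eq_decide] at heq
  have key : (p v).length = (p u).length + 1 ∨ (p u).length = (p v).length + 1 := by
    by_cases hmem : v ∈ (p u).support
    · right
      have hq : ((p u).takeUntil v hmem).IsPath := (hp u).takeUntil hmem
      have hqv : (p u).takeUntil v hmem = p v := (hup v _ hq).symm ▸ rfl
      -- u ∉ takeUntil support
      have hnd := (hp u).support_nodup
      have hspec := Walk.take_spec (p u) hmem
      have hu_not : u ∉ ((p u).takeUntil v hmem).support := by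
        have h2 : ((p u).takeUntil v hmem).support ++ ((p u).dropUntil v hmem).support.tail = (p u).support := by
          rw [← Walk.support_append, hspec]
        rw [← h2] at hnd
        have hdisj := (List.nodup_append'.mp hnd).2.2
        intro hu
        refine hdisj hu ?_
        have hend : u ∈ ((p u).dropUntil v hmem).support := Walk.end_mem_support _
        have := Walk.support_eq_cons ((p u).dropUntil v hmem)
        rw [this, List.mem_cons] at hend
        rcases hend with hend | hend
        · exact absurd hend hadj.ne
        · exact hend
      have hpath : (((p u).takeUntil v hmem).concat hadj.symm).IsPath := by
        rw [← Walk.isPath_reverse_iff, Walk.reverse_concat]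
        refine (hq.reverse).cons ?_
        simpa using hu_not
      have := hup u _ hpath
      rw [← this, Walk.length_concat, hqv]
    · left
      have hpath : ((p u).concat hadj).IsPath := by
        rw [← Walk.isPath_reverse_iff, Walk.reverse_concat]
        exact (hp u).reverse.cons (by simpa using hmem)
      have := hup v _ hpath
      rw [← this, Walk.length_concat]
  rcases key with h1 | h1
  · rw [h1, Nat.even_add_one] at heq
    exact iff_not_self heq
  · rw [h1, Nat.even_add_one] at heq
    exact iff_not_self heq.symm


lemma star_isTree_s4 {X : Type*} {H : SimpleGraph X} (c : X)
    (h1 : ∀ x, x ≠ c → H.Adj c x)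
    (h2 : ∀ ⦃x y⦄, H.Adj x y → x = c ∨ y = c) : H.IsTree := by
  have classify : ∀ {v w : X} (p : H.Walk v w), p.IsPath → v ≠ w →
      (∃ h : H.Adj v w, p = Walk.cons h Walk.nil) ∨
      (v ≠ c ∧ w ≠ c ∧ ∃ (ha : H.Adj v c) (hb : H.Adj c w),
        p = Walk.cons ha (Walk.cons hb Walk.nil)) := by
    intro v w p hp hne
    cases p with
    | nil => exact absurd rfl hne
    | @cons _ x _ hadj q =>
      cases q with
      | nil => exact Or.inl ⟨hadj, rfl⟩
      | @cons _ y _ hadj2 r =>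
        rw [Walk.cons_isPath_iff] at hp
        have hx : x = c := by
          rcases h2 hadj with hv | hx
          · rcases h2 hadj2 with hx | hy
            · exact hx
            · exfalso
              apply hp.2
              rw [Walk.support_cons]
              exact List.mem_cons_of_mem _ (hy.trans hv.symm ▸ Walk.start_mem_support r)
          · exact hx
        subst x
        rw [Walk.cons_isPath_iff] at hp
        cases r with
        | nil =>
          exact Or.inr ⟨hadj.ne, hadj2.ne', hadj, hadj2, rfl⟩
        | @cons _ z _ hadj3 r2 =>
          exfalso
          have hz : z = c := by
            rcases h2 hadj3 with hy | hz
            · exact absurd hy hadj2.ne'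
            · exact hz
          apply hp.1.2
          rw [Walk.support_cons]
          exact List.mem_cons_of_mem _ (hz ▸ Walk.start_mem_support r2)
  constructor
  · have : Nonempty X := ⟨c⟩
    refine Connected.mk fun x y => ?_
    have hc : ∀ z, H.Reachable c z := by
      intro z
      rcases eq_or_ne z c with h | h
      · rw [h]
      · exact (h1 z h).reachable
    exact (hc x).symm.trans (hc y)
  · apply isAcyclic_of_path_unique
    intro v w p q
    rcases eq_or_ne v w with rfl | hne
    · rw [Path.loop_eq p, Path.loop_eq q]
    · apply Subtype.ext
      rcases classify p.1 p.2 hne with ⟨h, hp⟩ | ⟨hv, hw, ha, hb, hp⟩ <;>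
        rcases classify q.1 q.2 hne with ⟨h', hq⟩ | ⟨hv', hw', ha', hb', hq⟩
      · rw [hp, hq]
      · exfalso; rcases h2 h with h | h
        · exact hv' h
        · exact hw' h
      · exfalso; rcases h2 h' with h | h
        · exact hv h
        · exact hw h
      · rw [hp, hq]

/-- `G` admits a proper `k`-coloring iff the vertex set of the join of `G` with the
complete graph on `k` new vertices can be covered by `k` subsets, each inducing a tree. -/
theorem colorable_iff_tree_cover
    {V : Type*} [Fintype V] (G : SimpleGraph V) (k : ℕ) (hk : 1 ≤ k) :
    G.Colorable k ↔
      ∃ Vs : Fin k → Set (V ⊕ Fin k),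
        (∀ i, InducesTree (augGraph G k) (Vs i)) ∧ (⋃ i, Vs i) = Set.univ := by
  classical
  constructor
  · rintro ⟨C⟩
    refine ⟨fun i => {x | (∃ v, x = Sum.inl v ∧ C v = i) ∨ x = Sum.inr i}, fun i => ?_, ?_⟩
    · have hc : (Sum.inr i : V ⊕ Fin k) ∈
          ({x | (∃ v, x = Sum.inl v ∧ C v = i) ∨ x = Sum.inr i} : Set (V ⊕ Fin k)) := Or.inr rfl
      refine star_isTree_s4 (⟨Sum.inr i, hc⟩ : _) ?_ ?_
      · rintro ⟨x, hx⟩ hne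
        rcases hx with ⟨v, rfl, hv⟩ | rfl
        · show (augGraph G k).Adj (Sum.inr i) (Sum.inl v)
          trivial
        · exact absurd (Subtype.ext rfl) hne
      · rintro ⟨x, hx⟩ ⟨y, hy⟩ hadj
        have hadj' : (augGraph G k).Adj x y := hadj
        rcases hx with ⟨u, rfl, hu⟩ | rfl
        · rcases hy with ⟨v, rfl, hv⟩ | rfl
          · exact absurd (hu.trans hv.symm) (C.valid hadj')
          · exact Or.inr (Subtype.ext rfl)
        · exact Or.inl (Subtype.ext rfl)
    · ext x
      simp only [Set.mem_iUnion, Set.mem_univ, iff_true]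
      rcases x with v | j
      · exact ⟨C v, Or.inl ⟨v, rfl, rfl⟩⟩
      · exact ⟨j, Or.inr rfl⟩
  · rintro ⟨Vs, hT, hcov⟩
    have hT' : ∀ i, ((augGraph G k).induce (Vs i)).IsTree := hT
    have hmem : ∀ x : V ⊕ Fin k, ∃ i, x ∈ Vs i := by
      intro x
      have hx : x ∈ ⋃ i, Vs i := hcov ▸ Set.mem_univ x
      simpa using hx
    choose fW hfW using fun j : Fin k => hmem (Sum.inr j)
    choose fv hfv using fun v : V => hmem (Sum.inl v)
    have col : ∀ i, ((augGraph G k).induce (Vs i)).Coloring Bool :=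
      fun i => (isTree_colorable (hT' i)).some
    have tri : ∀ (i) {a b c : V ⊕ Fin k}, a ∈ Vs i → b ∈ Vs i → c ∈ Vs i →
        (augGraph G k).Adj a b → (augGraph G k).Adj b c → (augGraph G k).Adj a c → False := by
      intro i a b c ha hb hc hab hbc hac
      exact acyclic_no_triangle (hT' i).2
        (a := ⟨a, ha⟩) (b := ⟨b, hb⟩) (c := ⟨c, hc⟩) hab hbc hac
    set Wfin : Fin k → Finset (Fin k) :=
      fun i => Finset.univ.filter (fun j => Sum.inr j ∈ Vs i) with hWfin
    have hmemW : ∀ {i j}, j ∈ Wfin i ↔ Sum.inr j ∈ Vs i := by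
      intro i j; simp [hWfin]
    have hle2 : ∀ i, (Wfin i).card ≤ 2 := by
      intro i
      by_contra h
      obtain ⟨s, hs, hcard⟩ := Finset.exists_subset_card_eq (s := Wfin i) (n := 3) (by omega)
      obtain ⟨j1, j2, j3, h12, h13, h23, rfl⟩ := Finset.card_eq_three.mp hcard
      have m1 := hmemW.mp (hs (show j1 ∈ ({j1, j2, j3} : Finset (Fin k)) by simp))
      have m2 := hmemW.mp (hs (show j2 ∈ ({j1, j2, j3} : Finset (Fin k)) by simp))
      have m3 := hmemW.mp (hs (show j3 ∈ ({j1, j2, j3} : Finset (Fin k)) by simp))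
      exact tri i m1 m2 m3 h12 h23 h13
    have hmix : ∀ i v, Sum.inl v ∈ Vs i → (Wfin i).card ≤ 1 := by
      intro i v hv
      by_contra h
      obtain ⟨j1, j2, hj1, hj2, hne⟩ := Finset.one_lt_card_iff.mp (show 1 < (Wfin i).card by omega)
      exact tri i hv (hmemW.mp hj1) (hmemW.mp hj2) trivial hne trivial
    -- counting
    have hk1 : k ≤ ∑ i : Fin k, (Wfin i).card := by
      have h1 : Finset.univ.biUnion Wfin = (Finset.univ : Finset (Fin k)) := by
        apply Finset.eq_univ_of_forall
        intro j
        exact Finset.mem_biUnion.mpr ⟨fW j, Finset.mem_univ _, hmemW.mpr (hfW j)⟩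
      calc k = (Finset.univ.biUnion Wfin).card := by rw [h1]; simp
        _ ≤ ∑ i : Fin k, (Wfin i).card := Finset.card_biUnion_le
    set t := (Finset.univ.filter fun i : Fin k => (Wfin i).card = 0).card with ht
    set b := (Finset.univ.filter fun i : Fin k => (Wfin i).card = 1).card with hb
    set a := (Finset.univ.filter fun i : Fin k => (Wfin i).card = 2).card with ha
    have hsum2 : ∑ i : Fin k, (Wfin i).card ≤ b + 2 * a := by
      have hpt : ∀ i : Fin k, (Wfin i).card ≤
          (if (Wfin i).card = 1 then 1 else 0) + 2 * (if (Wfin i).card = 2 then 1 else 0) := by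
        intro i
        have := hle2 i
        split_ifs <;> omega
      calc ∑ i : Fin k, (Wfin i).card
          ≤ ∑ i : Fin k, ((if (Wfin i).card = 1 then 1 else 0)
              + 2 * (if (Wfin i).card = 2 then 1 else 0)) := Finset.sum_le_sum fun i _ => hpt i
        _ = b + 2 * a := by
            rw [Finset.sum_add_distrib, ← Finset.mul_sum, Finset.sum_boole, Finset.sum_boole]
            simp [hb, ha]
    have hpart : t + b + a = k := by
      have hpt : ∀ i : Fin k, ((if (Wfin i).card = 0 then 1 else 0)
          + ((if (Wfin i).card = 1 then 1 else 0) + (if (Wfin i).card = 2 then 1 else 0))) = 1 := by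
        intro i
        have := hle2 i
        split_ifs <;> omega
      have := Finset.sum_congr rfl (fun i (_ : i ∈ (Finset.univ : Finset (Fin k))) => hpt i)
      rw [Finset.sum_const, Finset.card_univ, Fintype.card_fin, smul_eq_mul, mul_one] at this
      rw [Finset.sum_add_distrib, Finset.sum_add_distrib, Finset.sum_boole, Finset.sum_boole,
        Finset.sum_boole] at this
      simp only [Nat.cast_id] at this
      omega
    -- the color type
    have key : b + 2 * t ≤ k := by omega
    let Ct := {i : Fin k // (Wfin i).card = 1} ⊕ ({i : Fin k // (Wfin i).card = 0} × Bool)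
    have hcard : Fintype.card Ct ≤ k := by
      have : Fintype.card Ct = b + t * 2 := by
        simp [Ct, Fintype.card_subtype, hb, ht]
      omega
    have hzero : ∀ v : V, ¬ (Wfin (fv v)).card = 1 → (Wfin (fv v)).card = 0 := by
      intro v h
      have := hmix (fv v) v (hfv v)
      omega
    have coloring : G.Coloring Ct := by
      refine Coloring.mk (fun v =>
        if h : (Wfin (fv v)).card = 1 then Sum.inl ⟨fv v, h⟩
        else Sum.inr (⟨fv v, hzero v h⟩,
          if hm : Sum.inl v ∈ Vs (fv v) then col (fv v) ⟨Sum.inl v, hm⟩ else false)) ?_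
      intro u v hadj heq
      by_cases h1 : (Wfin (fv u)).card = 1 <;> by_cases h2 : (Wfin (fv v)).card = 1
      · rw [dif_pos h1, dif_pos h2] at heq
        injection heq with heq
        have heq2 : fv u = fv v := congrArg Subtype.val heq
        obtain ⟨j, hj⟩ := Finset.card_eq_one.mp h1
        have hjm : Sum.inr j ∈ Vs (fv u) := hmemW.mp (hj ▸ Finset.mem_singleton_self j)
        have hvm : Sum.inl v ∈ Vs (fv u) := by rw [heq2]; exact hfv v
        exact tri (fv u) (hfv u) hvm hjm hadj trivial trivial
      · rw [dif_pos h1, dif_neg h2] at heq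
        exact Sum.inl_ne_inr heq
      · rw [dif_neg h1, dif_pos h2] at heq
        exact Sum.inr_ne_inl heq
      · rw [dif_neg h1, dif_neg h2] at heq
        injection heq with heq
        have he : fv u = fv v := congrArg (fun p => (Prod.fst p).val) heq
        have hcol := congrArg Prod.snd heq
        dsimp only at hcol
        have hu' : Sum.inl u ∈ Vs (fv v) := by rw [← he]; exact hfv u
        rw [he] at hcol
        rw [dif_pos hu', dif_pos (hfv v)] at hcol
        have hadj' : ((augGraph G k).induce (Vs (fv v))).Adj ⟨Sum.inl u, hu'⟩ ⟨Sum.inl v, hfv v⟩ :=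
          hadj
        exact (col (fv v)).valid hadj' hcol
    exact (coloring.colorable).mono hcard
end

section
/- Let G = (V, E) be a finite simple graph with |V| ≥ 2. There exist two unimodal functions f_1, f_2 : V → ℝ≥0 with f_1(v) + f_2(v) = 1 for every v ∈ V if and only if V can be partitioned into two disjoint subsets V_1, V_2 with V_1 ∪ V_2 = V such that the induced subgraphs G(V_1) and G(V_2) are both trees. -/
open SimpleGraph

section Aux

variable {V : Type*} {G : SimpleGraph V}

/-- Induced subgraphs of acyclic graphs are acyclic. -/
lemma aux_isAcyclic_induce (h : G.IsAcyclic) (S : Set V) : (G.induce S).IsAcyclic := by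
  intro v c hc
  have hemb : G.induce S ↪g G := SimpleGraph.Embedding.induce S
  exact h _ ((SimpleGraph.Walk.map_isCycle_iff_of_injective
    (f := hemb.toHom) (fun a b hab => hemb.injective hab)).2 hc)

/-- A single vertex induces a tree. -/
lemma aux_inducesTree_singleton (v : V) : InducesTree G {v} := by
  have hsub : ∀ a b : ({v} : Set V), a = b := by
    rintro ⟨a, ha⟩ ⟨b, hb⟩
    simp only [Set.mem_singleton_iff] at ha hb
    subst ha; subst hb; rfl
  haveI : Nonempty ({v} : Set V) := ⟨⟨v, rfl⟩⟩
  refine ⟨⟨fun a b => by rw [hsub a b]⟩, ?_⟩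
  · intro a c hc
    cases c with
    | nil => exact hc.ne_nil rfl
    | cons h c' => exact (G.induce {v}).ne_of_adj h (hsub _ _)

/-- Lifting a walk whose support lies in `S` to the induced subgraph. -/
lemma aux_reachable_induce {S : Set V} : ∀ {a b : V} (p : G.Walk a b),
    (∀ x ∈ p.support, x ∈ S) → ∀ (ha : a ∈ S) (hb : b ∈ S),
    (G.induce S).Reachable ⟨a, ha⟩ ⟨b, hb⟩ := by
  intro a b p
  induction p with
  | nil => intro _ ha hb; exact Reachable.refl _
  | @cons a c b h p ih =>
    intro hs ha hb
    have hc : c ∈ S := hs c (by simp)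
    have hadj : (G.induce S).Adj ⟨a, ha⟩ ⟨c, hc⟩ := h
    exact hadj.reachable.trans (ih (fun x hx => hs x (by simp [hx])) hc hb)

lemma aux_exists_neighbor_of_walk {u b : V} (r : G.Walk u b) (h : u ≠ b) :
    ∃ z, G.Adj u z ∧ z ∈ r.support.tail := by
  cases r with
  | nil => exact absurd rfl h
  | cons hadj r' => exact ⟨_, hadj, by simp⟩

/-- A path between two vertices distinct from a degree-one vertex `u` avoids `u`. -/
lemma aux_not_mem_support [Fintype V] [DecidableEq V] [DecidableRel G.Adj] {u a b : V}
    (hd : G.degree u = 1) {p : G.Walk a b} (hp : p.IsPath) (ha : a ≠ u) (hb : b ≠ u) :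
    u ∉ p.support := by
  intro hu
  obtain ⟨n, hn⟩ := Finset.card_eq_one.mp hd
  have hq : (p.takeUntil u hu).IsPath := hp.takeUntil hu
  have hr : (p.dropUntil u hu).IsPath := hp.dropUntil hu
  have hnodup : ((p.takeUntil u hu).support ++ (p.dropUntil u hu).support.tail).Nodup := by
    rw [← SimpleGraph.Walk.support_append, p.take_spec hu]
    exact hp.support_nodup
  have hdisj := (List.nodup_append.mp hnodup).2.2
  obtain ⟨z, hzadj, hzmem⟩ := aux_exists_neighbor_of_walk (p.dropUntil u hu) (Ne.symm hb)
  obtain ⟨y, hyadj, hymem⟩ := aux_exists_neighbor_of_walk (p.takeUntil u hu).reverse (Ne.symm ha)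
  have hymem' : y ∈ (p.takeUntil u hu).support := by
    have := List.mem_of_mem_tail hymem
    rwa [SimpleGraph.Walk.support_reverse, List.mem_reverse] at this
  have hy : y = n := by
    have : y ∈ G.neighborFinset u := (SimpleGraph.mem_neighborFinset G u y).2 hyadj
    rw [hn] at this; simpa using this
  have hz : z = n := by
    have : z ∈ G.neighborFinset u := (SimpleGraph.mem_neighborFinset G u z).2 hzadj
    rw [hn] at this; simpa using this
  exact hdisj y hymem' z hzmem (hy.trans hz.symm)

/-- A finite tree on at least two vertices has a vertex whose removal leaves a tree. -/
lemma aux_compl_tree [Fintype V] (hG : G.IsTree) (h2 : 2 ≤ Fintype.card V) :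
    ∃ u : V, InducesTree G ({u}ᶜ : Set V) := by
  classical
  have hdeg1 : ∀ v, 1 ≤ G.degree v := by
    intro v
    obtain ⟨w, hw⟩ := Fintype.exists_ne_of_one_lt_card (by omega) v
    obtain ⟨p⟩ := hG.isConnected.preconnected v w
    cases p with
    | nil => exact absurd rfl hw
    | cons hadj p' => exact (G.degree_pos_iff_exists_adj v).2 ⟨_, hadj⟩
  have hcard := hG.card_edgeFinset
  have hsum : ∑ v, G.degree v = 2 * (Fintype.card V - 1) := by
    rw [SimpleGraph.sum_degrees_eq_twice_card_edges]; omega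
  have hex : ∃ u, G.degree u = 1 := by
    by_contra hc
    push_neg at hc
    have h2d : ∀ v, 2 ≤ G.degree v := fun v => by
      have h1 := hdeg1 v; have h2' := hc v; omega
    have hge : 2 * Fintype.card V ≤ ∑ v, G.degree v := by
      calc 2 * Fintype.card V = ∑ _v : V, 2 := by
            simp [Finset.sum_const, Finset.card_univ, mul_comm]
        _ ≤ _ := Finset.sum_le_sum fun v _ => h2d v
    omega
  obtain ⟨u, hu⟩ := hex
  obtain ⟨w0, hw0⟩ := Fintype.exists_ne_of_one_lt_card (by omega) u
  haveI : Nonempty ({u}ᶜ : Set V) := ⟨⟨w0, by simpa using hw0⟩⟩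
  refine ⟨u, ?_, aux_isAcyclic_induce hG.2 _⟩
  refine SimpleGraph.Connected.mk ?_
  rintro ⟨a, ha⟩ ⟨b, hb⟩
  simp only [Set.mem_compl_iff, Set.mem_singleton_iff] at ha hb
  obtain ⟨w⟩ := hG.isConnected.preconnected a b
  have hp : w.toPath.1.IsPath := w.toPath.2
  have hu' : u ∉ w.toPath.1.support := aux_not_mem_support hu hp ha hb
  exact aux_reachable_induce w.toPath.1
    (fun x hx => by
      simp only [Set.mem_compl_iff, Set.mem_singleton_iff]
      rintro rfl; exact hu' hx) _ _

lemma aux_isTree_of_univ (h : InducesTree G Set.univ) : G.IsTree := by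
  constructor
  · exact (SimpleGraph.induceUnivIso G).connected_iff.mp h.1
  · intro v c hc
    have hemb : G ↪g G.induce Set.univ := (SimpleGraph.induceUnivIso G).symm.toEmbedding
    exact h.2 _ ((SimpleGraph.Walk.map_isCycle_iff_of_injective
      (f := hemb.toHom) (fun a b hab => hemb.injective hab)).2 hc)

end Aux

/-- On a finite graph with at least two vertices, the constant function `1` has a
unimodal decomposition into two summands iff the vertex set can be partitioned into two
disjoint subsets each inducing a tree. -/
theorem one_decomposes_into_two_unimodal_iff_partition_into_two_trees
    {V : Type*} [Fintype V] (G : SimpleGraph V) (h2 : 2 ≤ Fintype.card V) :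
    (∃ f₁ f₂ : V → NNReal, UnimodalOn G f₁ ∧ UnimodalOn G f₂ ∧ ∀ v, f₁ v + f₂ v = 1) ↔
      ∃ V₁ V₂ : Set V, Disjoint V₁ V₂ ∧ V₁ ∪ V₂ = Set.univ ∧
        InducesTree G V₁ ∧ InducesTree G V₂ := by
  classical
  constructor
  · rintro ⟨f₁, f₂, hu₁, hu₂, hsum⟩
    have hne : Nonempty V := Fintype.card_pos_iff.mp (by omega)
    haveI := hne
    have hle1 : ∀ v, f₁ v ≤ 1 := fun v => (self_le_add_right (f₁ v) (f₂ v)).trans_eq (hsum v)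
    by_cases hconst : ∀ v w : V, f₁ v = f₁ w
    · -- constant case: the whole vertex set induces a tree, split off a vertex
      obtain ⟨v0⟩ := hne
      have huniv : InducesTree G Set.univ := by
        rcases eq_or_lt_of_le (zero_le : 0 ≤ f₁ v0) with h0 | h0
        · have hf2 : ∀ v, f₂ v = 1 := by
            intro v
            have h1 : f₁ v = 0 := (hconst v v0).trans h0.symm
            have := hsum v
            rwa [h1, zero_add] at this
          have hset : {v : V | (1 : NNReal) ≤ f₂ v} = Set.univ := by
            ext v; simp [hf2 v]
          rcases hu₂ 1 one_pos with h | h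
          · rw [hset] at h
            exact absurd h (Set.univ_eq_empty_iff.not.mpr (not_isEmpty_of_nonempty V))
          · rwa [hset] at h
        · have hset : {v : V | f₁ v0 ≤ f₁ v} = Set.univ := by
            ext v; simp [(hconst v0 v).le]
          rcases hu₁ _ h0 with h | h
          · rw [hset] at h
            exact absurd h (Set.univ_eq_empty_iff.not.mpr (not_isEmpty_of_nonempty V))
          · rwa [hset] at h
      obtain ⟨u, hcompl⟩ := aux_compl_tree (aux_isTree_of_univ huniv) h2
      exact ⟨{u}, {u}ᶜ, disjoint_compl_right, Set.union_compl_self _,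
        aux_inducesTree_singleton u, hcompl⟩
    · -- non-constant case
      push_neg at hconst
      obtain ⟨x, y, hxy⟩ := hconst
      obtain ⟨vm, -, hvm⟩ := Finset.exists_max_image Finset.univ f₁ ⟨x, Finset.mem_univ x⟩
      have hmax : ∀ v, f₁ v ≤ f₁ vm := fun v => hvm v (Finset.mem_univ v)
      have hMpos : 0 < f₁ vm := by
        rw [pos_iff_ne_zero]
        intro hM0
        exact hxy (by
          have hx0 : f₁ x = 0 := le_antisymm (hM0 ▸ hmax x) zero_le
          have hy0 : f₁ y = 0 := le_antisymm (hM0 ▸ hmax y) zero_le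
          rw [hx0, hy0])
      have hV1 : InducesTree G {v | f₁ vm ≤ f₁ v} := by
        rcases hu₁ _ hMpos with h | h
        · exact absurd h (Set.eq_empty_iff_forall_notMem.not.mpr
            (by push_neg; exact ⟨vm, show f₁ vm ≤ f₁ vm from le_rfl⟩))
        · exact h
      have hexlt : ∃ v, f₁ v < f₁ vm := by
        rcases lt_or_eq_of_le (hmax x) with h | h
        · exact ⟨x, h⟩
        · exact ⟨y, lt_of_le_of_ne (hmax y) fun hy => hxy (h.trans hy.symm)⟩
      set S : Finset V := Finset.univ.filter (fun v => f₁ v < f₁ vm) with hS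
      have hSne : S.Nonempty := by
        obtain ⟨v, hv⟩ := hexlt
        exact ⟨v, Finset.mem_filter.mpr ⟨Finset.mem_univ v, hv⟩⟩
      obtain ⟨w, hwS, hwmin⟩ := Finset.exists_min_image S f₂ hSne
      have hw_lt : f₁ w < f₁ vm := (Finset.mem_filter.mp hwS).2
      have hc2pos : 0 < f₂ w := by
        rw [pos_iff_ne_zero]
        intro h0
        have h1 := hsum w
        rw [h0, add_zero] at h1
        exact absurd (h1 ▸ hw_lt) (not_lt.mpr (hle1 vm))
      have hset : {v | f₂ w ≤ f₂ v} = {v | f₁ vm ≤ f₁ v}ᶜ := by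
        ext v
        simp only [Set.mem_setOf_eq, Set.mem_compl_iff, not_le]
        constructor
        · intro hvv
          by_contra h
          push_neg at h
          have h1 : f₁ w + f₂ w < f₁ v + f₂ v :=
            add_lt_add_of_lt_of_le (lt_of_lt_of_le hw_lt h) hvv
          rw [hsum w, hsum v] at h1
          exact lt_irrefl 1 h1
        · intro hv
          exact hwmin v (Finset.mem_filter.mpr ⟨Finset.mem_univ v, hv⟩)
      have hV2 : InducesTree G ({v | f₁ vm ≤ f₁ v}ᶜ) := by
        rcases hu₂ _ hc2pos with h | h
        · rw [hset] at h
          exact absurd h (Set.eq_empty_iff_forall_notMem.not.mpr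
            (by push_neg; exact ⟨w, by simpa using not_le.mpr hw_lt⟩))
        · rwa [hset] at h
      exact ⟨_, _, disjoint_compl_right, Set.union_compl_self _, hV1, hV2⟩
  · rintro ⟨V₁, V₂, hdis, huniv, h₁, h₂⟩
    have key : ∀ (W : Set V), InducesTree G W →
        UnimodalOn G (fun v => if v ∈ W then (1 : NNReal) else 0) := by
      intro W hW c hc
      by_cases hc1 : c ≤ 1
      · right
        have hset : {v | c ≤ (if v ∈ W then (1 : NNReal) else 0)} = W := by
          ext v
          by_cases hv : v ∈ W <;> simp [hv, hc1, hc.not_ge]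
        rw [hset]; exact hW
      · left
        ext v
        simp only [Set.mem_setOf_eq, Set.mem_empty_iff_false, iff_false, not_le]
        by_cases hv : v ∈ W <;> simp [hv] <;> [exact not_le.mp hc1; exact hc]
    refine ⟨fun v => if v ∈ V₁ then 1 else 0, fun v => if v ∈ V₂ then 1 else 0,
      key V₁ h₁, key V₂ h₂, ?_⟩
    intro v
    have hv : v ∈ V₁ ∪ V₂ := huniv ▸ Set.mem_univ v
    rcases hv with hv | hv
    · have hv2 : v ∉ V₂ := fun h => Set.disjoint_left.mp hdis hv h
      simp [hv, hv2]
    · have hv1 : v ∉ V₁ := fun h => Set.disjoint_left.mp hdis h hv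
      simp [hv, hv1]
end

section
/- Let G = (V, E) be a finite simple graph, let G̃ be its subdivision graph, and let f̃ be the associated function on the vertices of G̃. If G has a vertex cover consisting of k vertices, then there exist k unimodal functions f_1, …, f_k on G̃ with Σ_{i=1}^{k} f_i(x) = f̃(x) for every vertex x of G̃. -/
open SimpleGraph

/-- The subdivision graph of `G`: one new midpoint vertex on each edge of `G`,
adjacent exactly to the two endpoints of that edge. -/
def subdivGraph {V : Type*} (G : SimpleGraph V) : SimpleGraph (V ⊕ G.edgeSet) where
  Adj x y :=
    match x, y with
    | Sum.inl v, Sum.inr e => v ∈ (e : Sym2 V)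
    | Sum.inr e, Sum.inl v => v ∈ (e : Sym2 V)
    | _, _ => False
  symm := by
    constructor
    rintro (v | e) (w | e2) h
    · exact h.elim
    · exact h
    · exact h
    · exact h.elim
  loopless := by
    constructor
    rintro (v | e) h
    · exact h.elim
    · exact h.elim

/-- The canonical function on the subdivision graph: the degree on original vertices,
and `1` on midpoint vertices. -/
def ftilde {V : Type*} [Fintype V] (G : SimpleGraph V) [DecidableRel G.Adj] :
    V ⊕ G.edgeSet → NNReal
  | Sum.inl v => (G.degree v : NNReal)
  | Sum.inr _ => 1


lemma list_getLast?_ne_head {α : Type*} {a : α} {t : List α} (hnd : (a :: t).Nodup)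
    (ht : t ≠ []) : (a :: t).getLast? ≠ some a := by
  cases t with
  | nil => exact absurd rfl ht
  | cons b l =>
    rw [List.getLast?_cons_cons]
    intro hcontra
    rw [List.getLast?_eq_getLast (l := b :: l) (by simp), Option.some_inj] at hcontra
    exact (List.nodup_cons.mp hnd).1 (hcontra ▸ List.getLast_mem (by simp))

lemma isTree_of_unique_parent {W : Type*} (H : SimpleGraph W) (h : W) (r : W → ℕ)
    (hne : ∀ v, v ≠ h → ∃ w, H.Adj v w ∧ r w < r v)
    (huni : ∀ v w w', H.Adj v w → H.Adj v w' → r w < r v → r w' < r v → w = w')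
    (hmono : ∀ v w, H.Adj v w → r v ≠ r w) : H.IsTree := by
  classical
  constructor
  · -- connected
    have key : ∀ n v, r v < n → H.Reachable v h := by
      intro n
      induction n with
      | zero => intro v hv; omega
      | succ n ih =>
        intro v hv
        by_cases hvh : v = h
        · rw [hvh]
        · obtain ⟨w, hadj, hw⟩ := hne v hvh
          exact hadj.reachable.trans (ih w (by omega))
    have : Nonempty W := ⟨h⟩
    exact Connected.mk fun a b =>
      (key _ a (Nat.lt_succ_self _)).trans (key _ b (Nat.lt_succ_self _)).symm
  · -- acyclic
    intro a c hc
    obtain ⟨x, hx, hmax⟩ := Finset.exists_max_image c.support.toFinset r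
      ⟨a, List.mem_toFinset.2 c.start_mem_support⟩
    rw [List.mem_toFinset] at hx
    replace hmax : ∀ b ∈ c.support, r b ≤ r x := fun b hb => hmax b (List.mem_toFinset.2 hb)
    set d := c.rotate x hx with hd_def
    have hd : d.IsCycle := hc.rotate hx
    have hmax' : ∀ b ∈ d.support, r b ≤ r x := by
      intro b hb
      rw [Walk.support_eq_cons] at hb
      rcases List.mem_cons.mp hb with hb | hb
      · exact hb ▸ le_refl _
      · have : b ∈ c.support.tail := (Walk.support_rotate c x hx).mem_iff.mp hb
        exact hmax b (by rw [Walk.support_eq_cons]; exact List.mem_cons_of_mem _ this)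
    obtain ⟨y, hxy, q, hdeq⟩ := Walk.not_nil_iff.mp hd.not_nil
    obtain ⟨z, hxz, q', hreq⟩ := Walk.not_nil_iff.mp
      (by rw [Walk.not_nil_iff_lt_length, Walk.length_reverse]
          have := hd.three_le_length; omega : ¬ d.reverse.Nil)
    have hy_mem : y ∈ d.support := by rw [hdeq, Walk.support_cons]; exact List.mem_cons_of_mem _ q.start_mem_support
    have hz_mem : z ∈ d.support := by
      have : z ∈ d.reverse.support := by
        rw [hreq, Walk.support_cons]; exact List.mem_cons_of_mem _ q'.start_mem_support
      rwa [Walk.support_reverse, List.mem_reverse] at this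
    have h1 : d.edges = s(x, y) :: q.edges := by rw [hdeq, Walk.edges_cons]
    have h2 : d.edges.getLast? = some s(x, z) := by
      rw [← List.head?_reverse, ← Walk.edges_reverse, hreq, Walk.edges_cons, List.head?_cons]
    have hnd : d.edges.Nodup := hd.isCircuit.isTrail.edges_nodup
    have hlen : 3 ≤ d.edges.length := by rw [Walk.length_edges]; exact hd.three_le_length
    have hyz : y ≠ z := by
      intro hyzeq
      subst hyzeq
      rw [h1] at h2 hnd hlen
      exact list_getLast?_ne_head hnd (by intro h0; rw [h0] at hlen; simp at hlen) h2
    have hry : r y < r x := lt_of_le_of_ne (hmax' y hy_mem) (fun he => hmono x y hxy he.symm)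
    have hrz : r z < r x := lt_of_le_of_ne (hmax' z hz_mem) (fun he => hmono x z hxz he.symm)
    exact hyz (huni x y z hxy hxz hry hrz)

@[simp] lemma subdivGraph_adj_inl_inr {V : Type*} (G : SimpleGraph V) (v : V) (e : G.edgeSet) :
    (subdivGraph G).Adj (Sum.inl v) (Sum.inr e) ↔ v ∈ (e : Sym2 V) := Iff.rfl

@[simp] lemma subdivGraph_adj_inr_inl {V : Type*} (G : SimpleGraph V) (v : V) (e : G.edgeSet) :
    (subdivGraph G).Adj (Sum.inr e) (Sum.inl v) ↔ v ∈ (e : Sym2 V) := Iff.rfl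

@[simp] lemma subdivGraph_adj_inl_inl {V : Type*} (G : SimpleGraph V) (v w : V) :
    (subdivGraph G).Adj (Sum.inl v) (Sum.inl w) ↔ False := Iff.rfl

@[simp] lemma subdivGraph_adj_inr_inr {V : Type*} (G : SimpleGraph V) (e e' : G.edgeSet) :
    (subdivGraph G).Adj (Sum.inr e) (Sum.inr e') ↔ False := Iff.rfl

/-- If `G` has a vertex cover of `k` vertices, then the canonical function on the
subdivision graph of `G` has a unimodal decomposition into `k` components. -/
theorem vertexCover_imp_unimodal_decomposition
    {V : Type*} [Fintype V] [DecidableEq V] (G : SimpleGraph V) [DecidableRel G.Adj]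
    (k : ℕ) (S : Finset V)
    (hcov : ∀ u w, G.Adj u w → u ∈ S ∨ w ∈ S) (hcard : S.card = k) :
    ∃ f : Fin k → (V ⊕ G.edgeSet) → NNReal,
      (∀ i, UnimodalOn (subdivGraph G) (f i)) ∧
      ∀ x, ∑ i, f i x = ftilde G x := by
  classical
  have hsel : ∀ e : G.edgeSet, ∃ v, v ∈ S ∧ v ∈ (e : Sym2 V) := by
    rintro ⟨e, he⟩
    induction e using Sym2.ind with
    | _ u w =>
      rw [mem_edgeSet] at he
      rcases hcov u w he with h | h
      · exact ⟨u, h, Sym2.mem_mk_left u w⟩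
      · exact ⟨w, h, Sym2.mem_mk_right u w⟩
  choose φ hφS hφmem using hsel
  set σ : Fin k ≃ {x // x ∈ S} := (S.equivFinOfCardEq hcard).symm with hσ
  set F : Fin k → (V ⊕ G.edgeSet) → NNReal := fun i =>
    Sum.elim
      (fun v => if v = (σ i : V) then (G.degree v : NNReal)
        else if v ∉ S ∧ G.Adj v (σ i : V) then 1 else 0)
      (fun e => if φ e = (σ i : V) then 1 else 0) with hF
  have one_le_deg : ∀ v w : V, G.Adj v w → (1 : NNReal) ≤ (G.degree v : NNReal) := by
    intro v w hvw
    have : 0 < G.degree v := (degree_pos_iff_exists_adj (G := G) (v := v)).2 ⟨w, hvw⟩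
    exact_mod_cast this
  refine ⟨F, ?_, ?_⟩
  · -- unimodality
    intro i c hc
    set s : V := (σ i : V) with hs_def
    have hsS : s ∈ S := (σ i).2
    set T : Set (V ⊕ G.edgeSet) := {x | c ≤ F i x} with hTdef
    have hmemr : ∀ e : G.edgeSet, Sum.inr e ∈ T ↔ (φ e = s ∧ c ≤ 1) := by
      intro e
      simp only [hTdef, Set.mem_setOf_eq, hF, Sum.elim_inr]
      by_cases h : φ e = s
      · simp [h, ← hs_def]
      · simp [h, ← hs_def, hc.not_ge]
    have hmeml : ∀ v : V, Sum.inl v ∈ T ↔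
        (v = s ∧ c ≤ (G.degree s : NNReal)) ∨ (v ≠ s ∧ v ∉ S ∧ G.Adj v s ∧ c ≤ 1) := by
      intro v
      simp only [hTdef, Set.mem_setOf_eq, hF, Sum.elim_inl, ← hs_def]
      by_cases h1 : v = s
      · subst h1; simp
      · rw [if_neg h1]
        by_cases h2 : v ∉ S ∧ G.Adj v s
        · rw [if_pos h2]
          simp [h1, h2.1, h2.2]
        · rw [if_neg h2]
          constructor
          · intro h
            exact absurd h hc.not_ge
          · rintro (⟨h, -⟩ | ⟨-, hvS, hadj, -⟩)
            · exact absurd h h1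
            · exact absurd ⟨hvS, hadj⟩ h2
    rcases Set.eq_empty_or_nonempty T with hT0 | hTne
    · exact Or.inl hT0
    right
    have hub_mem : Sum.inl s ∈ T := by
      obtain ⟨x, hx⟩ := hTne
      refine (hmeml s).2 (Or.inl ⟨rfl, ?_⟩)
      cases x with
      | inl v =>
        rcases (hmeml v).1 hx with ⟨_, h⟩ | ⟨_, _, hadj, hc1⟩
        · exact h
        · exact hc1.trans (one_le_deg s v hadj.symm)
      | inr e =>
        obtain ⟨hφe, hc1⟩ := (hmemr e).1 hx
        have hs_mem : s ∈ (e : Sym2 V) := hφe ▸ hφmem e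
        obtain ⟨w, hw⟩ : ∃ w, G.Adj s w := by
          obtain ⟨ev, hev⟩ := e
          induction ev using Sym2.ind with
          | _ a b =>
            rw [mem_edgeSet] at hev
            rcases Sym2.mem_iff.mp hs_mem with rfl | rfl
            exacts [⟨b, hev⟩, ⟨a, hev.symm⟩]
        exact hc1.trans (one_le_deg s w hw)
    have hmid : ∀ (v : V) (hadj : G.Adj v s), v ∉ S → φ ⟨s(v, s), hadj⟩ = s := by
      intro v hadj hvS
      rcases Sym2.mem_iff.mp (hφmem ⟨s(v, s), hadj⟩) with h | h
      · exact absurd (h ▸ hφS ⟨s(v, s), hadj⟩) hvS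
      · exact h
    show ((subdivGraph G).induce T).IsTree
    apply isTree_of_unique_parent _ (⟨Sum.inl s, hub_mem⟩ : T)
      (fun x => Sum.elim (fun v => if v = s then 0 else 2) (fun _ => 1) x.1)
    · -- existence of parent
      rintro ⟨x, hx⟩ hne
      cases x with
      | inl v =>
        have hvs : v ≠ s := fun h => hne (Subtype.ext (show Sum.inl v = Sum.inl s from by rw [h]))
        obtain ⟨-, hvS, hadj, hc1⟩ := ((hmeml v).1 hx).resolve_left (fun h => hvs h.1)
        refine ⟨⟨Sum.inr ⟨s(v, s), hadj⟩, (hmemr _).2 ⟨hmid v hadj hvS, hc1⟩⟩, ?_, ?_⟩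
        · show (subdivGraph G).Adj (Sum.inl v) (Sum.inr ⟨s(v, s), hadj⟩)
          exact Sym2.mem_mk_left v s
        · simp [hvs]
      | inr e =>
        obtain ⟨hφe, -⟩ := (hmemr e).1 hx
        refine ⟨⟨Sum.inl s, hub_mem⟩, ?_, ?_⟩
        · show (subdivGraph G).Adj (Sum.inr e) (Sum.inl s)
          exact hφe ▸ hφmem e
        · simp
    · -- uniqueness of parent
      rintro ⟨x, hx⟩ ⟨w, hw⟩ ⟨w', hw'⟩ haw haw' hrw hrw'
      cases x with
      | inl v =>
        by_cases hvs : v = s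
        · subst hvs
          simp only [Sum.elim_inl, if_pos rfl] at hrw
          exact absurd hrw (Nat.not_lt_zero _)
        · cases w with
          | inl u => exact absurd haw (by simp)
          | inr e =>
            cases w' with
            | inl u => exact absurd haw' (by simp)
            | inr e' =>
              have h1 : v ∈ (e : Sym2 V) := haw
              have h2 : v ∈ (e' : Sym2 V) := haw'
              have hse : s ∈ (e : Sym2 V) := ((hmemr e).1 hw).1 ▸ hφmem e
              have hse' : s ∈ (e' : Sym2 V) := ((hmemr e').1 hw').1 ▸ hφmem e'
              have he : (e : Sym2 V) = s(v, s) := (Sym2.mem_and_mem_iff hvs).1 ⟨h1, hse⟩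
              have he' : (e' : Sym2 V) = s(v, s) := (Sym2.mem_and_mem_iff hvs).1 ⟨h2, hse'⟩
              have hee : e = e' := Subtype.ext (he.trans he'.symm)
              exact Subtype.ext (show Sum.inr e = Sum.inr e' from by rw [hee])
      | inr e =>
        cases w with
        | inr e2 => exact absurd haw (by simp)
        | inl u =>
          cases w' with
          | inr e2 => exact absurd haw' (by simp)
          | inl u' =>
            simp only [Sum.elim_inl, Sum.elim_inr] at hrw hrw'
            have hu : u = s := by by_contra h; rw [if_neg h] at hrw; omega
            have hu' : u' = s := by by_contra h; rw [if_neg h] at hrw'; omega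
            exact Subtype.ext (show Sum.inl u = Sum.inl u' from by rw [hu, hu'])
    · -- edges change rank
      rintro ⟨x, hx⟩ ⟨w, hw⟩ haw
      cases x with
      | inl v =>
        cases w with
        | inl u => exact absurd haw (by simp)
        | inr e =>
          simp only [Sum.elim_inl, Sum.elim_inr]
          by_cases hvs : v = s
          · rw [if_pos hvs]; omega
          · rw [if_neg hvs]; omega
      | inr e =>
        cases w with
        | inr e2 => exact absurd haw (by simp)
        | inl u =>
          simp only [Sum.elim_inl, Sum.elim_inr]
          by_cases hus : u = s
          · rw [if_pos hus]; omega
          · rw [if_neg hus]; omega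
  · -- the sum
    intro x
    cases x with
    | inl v =>
      by_cases hvS : v ∈ S
      · have key : ∀ i : Fin k, F i (Sum.inl v) =
            if i = σ.symm ⟨v, hvS⟩ then (G.degree v : NNReal) else 0 := by
          intro i
          simp only [hF, Sum.elim_inl]
          by_cases hi : i = σ.symm ⟨v, hvS⟩
          · rw [if_pos hi, if_pos]
            rw [hi, Equiv.apply_symm_apply]
          · rw [if_neg hi, if_neg, if_neg]
            · simp [hvS]
            · intro h
              exact hi (by rw [← Equiv.symm_apply_apply σ i]; congr 1; exact Subtype.ext h.symm)
        rw [Finset.sum_congr rfl fun i _ => key i, Finset.sum_ite_eq' Finset.univ]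
        simp [ftilde]
      · have key : ∀ i : Fin k, F i (Sum.inl v) = if G.Adj v (σ i : V) then 1 else 0 := by
          intro i
          simp only [hF, Sum.elim_inl]
          rw [if_neg (fun h : v = (σ i : V) => hvS (by rw [h]; exact (σ i).2))]
          simp [hvS]
        rw [Finset.sum_congr rfl fun i _ => key i]
        rw [show ∑ i : Fin k, (if G.Adj v (σ i : V) then (1 : NNReal) else 0)
            = ∑ w : {x // x ∈ S}, (if G.Adj v (w : V) then (1 : NNReal) else 0) from
          Equiv.sum_comp σ (fun w : {x // x ∈ S} => if G.Adj v (w : V) then (1 : NNReal) else 0)]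
        rw [Finset.sum_coe_sort S (fun w => if G.Adj v w then (1 : NNReal) else 0)]
        rw [Finset.sum_boole]
        have hfil : S.filter (fun w => G.Adj v w) = G.neighborFinset v := by
          ext w
          simp only [Finset.mem_filter, mem_neighborFinset]
          exact ⟨fun h => h.2, fun h => ⟨(hcov v w h).resolve_left hvS, h⟩⟩
        rw [hfil]
        rfl
    | inr e =>
      have key : ∀ i : Fin k, F i (Sum.inr e) =
          if i = σ.symm ⟨φ e, hφS e⟩ then 1 else 0 := by
        intro i
        simp only [hF, Sum.elim_inr]
        by_cases hi : i = σ.symm ⟨φ e, hφS e⟩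
        · rw [if_pos hi, if_pos]
          rw [hi, Equiv.apply_symm_apply]
        · rw [if_neg hi, if_neg]
          intro h
          exact hi (by rw [← Equiv.symm_apply_apply σ i]; congr 1; exact Subtype.ext h.symm)
      rw [Finset.sum_congr rfl fun i _ => key i, Finset.sum_ite_eq' Finset.univ]
      simp [ftilde]
end

section
/- Let G = (V, E) be a finite simple graph with girth greater than 4 (that is, G contains no cycles of length 3 or 4), let G̃ be its subdivision graph, and let f̃ be the associated function. If G has a vertex cover consisting of k vertices, then there exist k unimodal functions f_1, …, f_k on G̃ with Σ_{i=1}^{k} f_i(x) = f̃(x) for every vertex x of G̃, such that the family f_1, …, f_k is strongly unimodal. -/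
open SimpleGraph

/-- A strongly unimodal family: each member is unimodal and every finite intersection of
positive superlevel sets is empty or induces a tree. -/
def StronglyUnimodal {V : Type*} (G : SimpleGraph V) {k : ℕ} (f : Fin k → V → NNReal) : Prop :=
  (∀ i, UnimodalOn G (f i)) ∧
  ∀ I : Finset (Fin k), I.Nonempty → ∀ c : Fin k → NNReal, (∀ i ∈ I, 0 < c i) →
    (⋂ i ∈ I, {v | c i ≤ f i v}) = ∅ ∨ InducesTree G (⋂ i ∈ I, {v | c i ≤ f i v})

lemma isTree_aux {W : Type*} (H : SimpleGraph W) (r : W) (ρ : W → ℕ)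
    (hne : ∀ a b, H.Adj a b → ρ a ≠ ρ b)
    (hlow : ∀ v, v ≠ r → ∃ u, H.Adj v u ∧ ρ u < ρ v)
    (huniq : ∀ v a b, H.Adj v a → H.Adj v b → ρ a < ρ v → ρ b < ρ v → a = b) :
    H.IsTree := by
  classical
  have key : ∀ n (v : W), ρ v ≤ n → H.Reachable v r := by
    intro n
    induction n with
    | zero =>
      intro v hv
      rcases eq_or_ne v r with rfl | h
      · exact Reachable.refl _
      · obtain ⟨u, hu, hlt⟩ := hlow v h
        omega
    | succ n ih =>
      intro v hv
      rcases eq_or_ne v r with rfl | h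
      · exact Reachable.refl _
      · obtain ⟨u, hu, hlt⟩ := hlow v h
        exact (hu.reachable).trans (ih u (by omega))
  have : Nonempty W := ⟨r⟩
  constructor
  · exact ⟨fun u v => ((key (ρ u) u le_rfl).trans (key (ρ v) v le_rfl).symm)⟩
  · intro x p hp
    have hsupne : p.support ≠ [] := p.support_ne_nil
    obtain ⟨v, hv, hmax⟩ := p.support.toFinset.exists_max_image ρ
      (by simpa [List.toFinset_eq_empty_iff, Finset.nonempty_iff_ne_empty] using hsupne)
    rw [List.mem_toFinset] at hv
    have hmax' : ∀ u ∈ p.support, ρ u ≤ ρ v := fun u hu => hmax u (List.mem_toFinset.2 hu)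
    obtain ⟨q, hq, hqs⟩ : ∃ q : H.Walk v v, q.IsCycle ∧ ∀ u ∈ q.support, ρ u ≤ ρ v := by
      refine ⟨p.rotate v hv, hp.rotate hv, ?_⟩
      intro u hu
      rw [Walk.support_eq_cons, List.mem_cons] at hu
      rcases hu with rfl | hu
      · exact le_rfl
      · exact hmax' u (List.mem_of_mem_tail ((Walk.support_rotate p v hv).mem_iff.1 hu))
    cases q with
    | nil => simpa using hq.three_le_length
    | @cons _ a _ h q' =>
      obtain ⟨b, w, hb, hconcat⟩ := Walk.exists_cons_eq_concat h q'
      have hlen : 3 ≤ q'.length + 1 := by simpa using hq.three_le_length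
      have hane : ρ a < ρ v := by
        have h1 : ρ a ≤ ρ v := hqs a (by simp)
        have h2 : ρ v ≠ ρ a := hne _ _ h
        omega
      have hbmem : b ∈ (Walk.cons h q').support := by
        rw [hconcat, Walk.support_concat]
        exact List.mem_append_left _ w.end_mem_support
      have hbne : ρ b < ρ v := by
        have h1 : ρ b ≤ ρ v := hqs b hbmem
        have h2 : ρ v ≠ ρ b := hne _ _ hb.symm
        omega
      have hab : a = b := huniq v a b h hb.symm hane hbne
      subst hab
      have hnodup : ((Walk.cons h q').edges).Nodup := hq.1.1.edges_nodup
      cases w with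
      | nil =>
        have := congrArg Walk.length hconcat
        simp [Walk.length_concat] at this
        omega
      | @cons _ y _ hw w' =>
        have hE := congrArg Walk.edges hconcat
        rw [Walk.concat_cons, Walk.edges_cons, Walk.edges_cons, Walk.edges_concat] at hE
        simp only [List.concat_eq_append, List.cons.injEq] at hE
        have hmem2 : s(v, a) ∈ q'.edges := by
          rw [hE.2]
          simp [Sym2.eq_swap]
        rw [Walk.edges_cons] at hnodup
        exact (List.nodup_cons.1 hnodup).1 hmem2

lemma inducesTree_of_subsingleton {V : Type*} (G : SimpleGraph V) (A : Set V)
    (hne : A.Nonempty) (hsub : A.Subsingleton) : InducesTree G A := by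
  obtain ⟨x, hx⟩ := hne
  show (G.induce A).IsTree
  refine isTree_aux _ ⟨x, hx⟩ (fun _ => 0) ?_ ?_ ?_
  · intro a b hab
    have hG : G.Adj (a : V) (b : V) := hab
    have : (a : V) = b := hsub a.2 b.2
    rw [this] at hG
    exact absurd hG (G.loopless.irrefl _)
  · intro v hv
    exact absurd (Subtype.ext (hsub v.2 hx)) hv
  · intro v a b _ _ h _
    simp at h

/-- If `G` has girth greater than `4` (every cycle has length at least `5`) and a vertex
cover of `k` vertices, then the canonical function on the subdivision graph of `G` has a
strongly unimodal decomposition into `k` components. -/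
theorem vertexCover_imp_strongly_unimodal_decomposition
    {V : Type*} [Fintype V] [DecidableEq V] (G : SimpleGraph V) [DecidableRel G.Adj]
    (hgirth : ∀ (v : V) (p : G.Walk v v), p.IsCycle → 4 < p.length)
    (k : ℕ) (S : Finset V)
    (hcov : ∀ u w, G.Adj u w → u ∈ S ∨ w ∈ S) (hcard : S.card = k) :
    ∃ f : Fin k → (V ⊕ G.edgeSet) → NNReal,
      (∀ i, UnimodalOn (subdivGraph G) (f i)) ∧
      (∀ x, ∑ i, f i x = ftilde G x) ∧
      StronglyUnimodal (subdivGraph G) f := by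
  classical
  -- enumeration of the cover
  set s : Fin k → V := fun i => (S.equivFin.symm (Fin.cast hcard.symm i) : V) with hsdef
  have hsmem : ∀ i, s i ∈ S := fun i => (S.equivFin.symm (Fin.cast hcard.symm i)).2
  have hsinj : Function.Injective s := by
    intro i j hij
    have h1 := S.equivFin.symm.injective (Subtype.ext hij)
    rw [Fin.ext_iff] at h1 ⊢
    simpa using h1
  have hssurj : ∀ v, v ∈ S → ∃ i, s i = v := by
    intro v hv
    refine ⟨Fin.cast hcard (S.equivFin ⟨v, hv⟩), ?_⟩
    rw [hsdef]
    have h1 : Fin.cast hcard.symm (Fin.cast hcard (S.equivFin ⟨v, hv⟩)) = S.equivFin ⟨v, hv⟩ :=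
      rfl
    show ((S.equivFin.symm (Fin.cast hcard.symm (Fin.cast hcard (S.equivFin ⟨v, hv⟩)))) : V) = v
    rw [h1, Equiv.symm_apply_apply]
  -- choice of a covering endpoint for each edge
  have hex : ∀ e : G.edgeSet, ∃ i : Fin k, s i ∈ (e : Sym2 V) := by
    rintro ⟨z, hz⟩
    induction z using Sym2.ind with
    | _ u w =>
      rw [SimpleGraph.mem_edgeSet] at hz
      rcases hcov u w hz with h | h
      · obtain ⟨i, rfl⟩ := hssurj u h
        exact ⟨i, by simp⟩
      · obtain ⟨i, rfl⟩ := hssurj w h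
        exact ⟨i, by simp⟩
  set idx : G.edgeSet → Fin k := fun e => (hex e).choose with hidxdef
  have hidx : ∀ e : G.edgeSet, s (idx e) ∈ (e : Sym2 V) := fun e => (hex e).choose_spec
  -- the decomposition
  set F : Fin k → (V ⊕ G.edgeSet) → NNReal := fun i x =>
    Sum.elim
      (fun v => if v = s i then (G.degree v : NNReal)
        else if v ∈ S then 0
        else if ∃ e : G.edgeSet, v ∈ (e : Sym2 V) ∧ idx e = i then 1 else 0)
      (fun e => if idx e = i then 1 else 0) x
    with hFdef
  have hfinl : ∀ (i : Fin k) (v : V), F i (Sum.inl v) =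
      if v = s i then (G.degree v : NNReal)
      else if v ∈ S then 0
      else if ∃ e : G.edgeSet, v ∈ (e : Sym2 V) ∧ idx e = i then 1 else 0 := fun i v => by
    rw [hFdef]
    rfl
  have hfinr : ∀ (i : Fin k) (e : G.edgeSet), F i (Sum.inr e) =
      if idx e = i then 1 else 0 := fun i e => by rw [hFdef]; rfl
  -- basic facts
  have hedge_eq : ∀ (v : V) (i : Fin k) (e : G.edgeSet), v ≠ s i → v ∈ (e : Sym2 V) →
      idx e = i → (e : Sym2 V) = s(v, s i) := by
    intro v i e hvne hv hi
    have h2 : s i ∈ (e : Sym2 V) := by rw [← hi]; exact hidx e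
    exact (Sym2.mem_and_mem_iff hvne).1 ⟨hv, h2⟩
  have hadj_of : ∀ (v : V) (i : Fin k) (e : G.edgeSet), v ≠ s i → v ∈ (e : Sym2 V) →
      idx e = i → G.Adj v (s i) := by
    intro v i e hvne hv hi
    have h2 := hedge_eq v i e hvne hv hi
    have h3 := e.2
    rw [h2] at h3
    exact h3
  have huniq_e : ∀ (v : V) (i : Fin k) (e e' : G.edgeSet), v ≠ s i →
      v ∈ (e : Sym2 V) → idx e = i → v ∈ (e' : Sym2 V) → idx e' = i → e = e' := by
    intro v i e e' hvne hv hi hv' hi'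
    exact Subtype.ext ((hedge_eq v i e hvne hv hi).trans (hedge_eq v i e' hvne hv' hi').symm)
  have hdegpos : ∀ (u : V) (e : G.edgeSet), u ∈ (e : Sym2 V) → 0 < G.degree u := by
    intro u e hu
    obtain ⟨w, hw⟩ := Sym2.mem_iff_exists.1 hu
    have hadj : G.Adj u w := G.mem_edgeSet.1 (by rw [← hw]; exact e.2)
    exact (G.degree_pos_iff_exists_adj u).2 ⟨w, hadj⟩
  have hdeg1 : ∀ (i : Fin k) (e : G.edgeSet), idx e = i →
      (1 : NNReal) ≤ (G.degree (s i) : NNReal) := by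
    intro i e hi
    have h2 : s i ∈ (e : Sym2 V) := by rw [← hi]; exact hidx e
    exact_mod_cast Nat.one_le_cast.2 (hdegpos (s i) e h2)
  -- adjacency facts in the subdivision graph
  have hadjII : ∀ (a b : V), ¬ (subdivGraph G).Adj (Sum.inl a) (Sum.inl b) := fun a b h => h
  have hadjEE : ∀ (a b : G.edgeSet), ¬ (subdivGraph G).Adj (Sum.inr a) (Sum.inr b) :=
    fun a b h => h
  -- unimodality of each piece
  have hUni : ∀ i, UnimodalOn (subdivGraph G) (F i) := by
    intro i c hc
    by_cases hd : c ≤ (G.degree (s i) : NNReal)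
    · by_cases h1 : c ≤ 1
      · right
        show ((subdivGraph G).induce {y | c ≤ F i y}).IsTree
        have hrA : Sum.inl (s i) ∈ {y | c ≤ F i y} := by
          rw [Set.mem_setOf_eq, hfinl, if_pos rfl]
          exact hd
        refine isTree_aux _ ⟨Sum.inl (s i), hrA⟩
          (fun x => Sum.elim (fun v => if v = s i then 0 else 2) (fun _ => 1) x.1) ?_ ?_ ?_
        · rintro ⟨(av | ae), ha⟩ ⟨(bv | be), hb⟩ hab
          · exact absurd hab (hadjII av bv)
          · by_cases h : av = s i <;> simp [h]
          · by_cases h : bv = s i <;> simp [h]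
          · exact absurd hab (hadjEE ae be)
        · rintro ⟨(v | e), hmem⟩ hne'
          · by_cases hv : v = s i
            · exact absurd (Subtype.ext (congrArg Sum.inl hv)) hne'
            · have hm : c ≤ F i (Sum.inl v) := hmem
              rw [hfinl, if_neg hv] at hm
              by_cases hS : v ∈ S
              · rw [if_pos hS] at hm
                exact absurd (le_zero_iff.1 hm) hc.ne'
              · rw [if_neg hS] at hm
                split_ifs at hm with hex2
                · obtain ⟨e, hve, hie⟩ := hex2
                  refine ⟨⟨Sum.inr e, ?_⟩, ?_, ?_⟩
                  · rw [Set.mem_setOf_eq, hfinr, if_pos hie]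
                    exact h1
                  · exact (hve : (subdivGraph G).Adj (Sum.inl v) (Sum.inr e))
                  · simp [hv]
                · exact absurd (le_zero_iff.1 hm) hc.ne'
          · have hm : c ≤ F i (Sum.inr e) := hmem
            rw [hfinr] at hm
            split_ifs at hm with hie
            · refine ⟨⟨Sum.inl (s i), hrA⟩, ?_, ?_⟩
              · have h2 : s i ∈ (e : Sym2 V) := by rw [← hie]; exact hidx e
                exact (h2 : (subdivGraph G).Adj (Sum.inr e) (Sum.inl (s i)))
              · simp
            · exact absurd (le_zero_iff.1 hm) hc.ne'
        · rintro ⟨(v | e), hv⟩ ⟨(av | ae), ha⟩ ⟨(bv | be), hb⟩ hxa hxb hra hrb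
          · exact absurd hxa (hadjII v av)
          · exact absurd hxa (hadjII v av)
          · exact absurd hxb (hadjII v bv)
          · by_cases hvs : v = s i
            · simp [hvs] at hra
            · have hva : v ∈ (ae : Sym2 V) := hxa
              have hvb : v ∈ (be : Sym2 V) := hxb
              have hma : c ≤ F i (Sum.inr ae) := ha
              have hmb : c ≤ F i (Sum.inr be) := hb
              rw [hfinr] at hma hmb
              split_ifs at hma with hia
              · split_ifs at hmb with hib
                · exact Subtype.ext (congrArg Sum.inr (huniq_e v i ae be hvs hva hia hvb hib))
                · exact absurd (le_zero_iff.1 hmb) hc.ne'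
              · exact absurd (le_zero_iff.1 hma) hc.ne'
          · have hra' : (if av = s i then 0 else 2) < 1 := by simpa using hra
            have hrb' : (if bv = s i then 0 else 2) < 1 := by simpa using hrb
            have h2 : av = s i := by
              by_contra hav
              rw [if_neg hav] at hra'
              omega
            have h3 : bv = s i := by
              by_contra hbv
              rw [if_neg hbv] at hrb'
              omega
            exact Subtype.ext (congrArg Sum.inl (h2.trans h3.symm))
          · exact absurd hxb (hadjEE e be)
          · exact absurd hxa (hadjEE e ae)
          · exact absurd hxa (hadjEE e ae)
      · right
        have hAeq : {y | c ≤ F i y} = {Sum.inl (s i)} := by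
          ext x
          simp only [Set.mem_setOf_eq, Set.mem_singleton_iff]
          constructor
          · rcases x with v | e
            · intro hm
              rw [hfinl] at hm
              split_ifs at hm with h2 h3 h4
              · rw [h2]
              · exact absurd (le_zero_iff.1 hm) hc.ne'
              · exact absurd hm h1
              · exact absurd (le_zero_iff.1 hm) hc.ne'
            · intro hm
              rw [hfinr] at hm
              split_ifs at hm
              · exact absurd hm h1
              · exact absurd (le_zero_iff.1 hm) hc.ne'
          · rintro rfl
            rw [hfinl, if_pos rfl]
            exact hd
        rw [hAeq]
        exact inducesTree_of_subsingleton _ _ ⟨_, rfl⟩ Set.subsingleton_singleton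
    · left
      ext x
      simp only [Set.mem_setOf_eq, Set.mem_empty_iff_false, iff_false]
      intro hm
      rcases x with v | e
      · rw [hfinl] at hm
        split_ifs at hm with h2 h3 h4
        · rw [h2] at hm
          exact hd hm
        · exact hc.ne' (le_zero_iff.1 hm)
        · obtain ⟨e, hve, hie⟩ := h4
          exact hd (hm.trans (hdeg1 i e hie))
        · exact hc.ne' (le_zero_iff.1 hm)
      · rw [hfinr] at hm
        split_ifs at hm with hie
        · exact hd (hm.trans (hdeg1 i e hie))
        · exact hc.ne' (le_zero_iff.1 hm)
  -- the sum identity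
  have hSum : ∀ x, ∑ i, F i x = ftilde G x := by
    intro x
    rcases x with v | e
    · by_cases hv : v ∈ S
      · obtain ⟨j, rfl⟩ := hssurj v hv
        have heq : ∀ i, F i (Sum.inl (s j)) =
            if j = i then (G.degree (s j) : NNReal) else 0 := by
          intro i
          rw [hfinl]
          by_cases hji : j = i
          · subst hji
            rw [if_pos rfl, if_pos rfl]
          · rw [if_neg (fun h => hji (hsinj h)), if_pos hv, if_neg hji]
        simp only [heq]
        rw [Finset.sum_ite_eq]
        simp [ftilde]
      · have heq : ∀ i, F i (Sum.inl v) =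
            if ∃ e : G.edgeSet, v ∈ (e : Sym2 V) ∧ idx e = i then 1 else 0 := by
          intro i
          rw [hfinl, if_neg (fun h => hv (by rw [h]; exact hsmem i)), if_neg hv]
        simp only [heq]
        rw [Finset.sum_boole]
        have hcards : (Finset.univ.filter
            fun i => ∃ e : G.edgeSet, v ∈ (e : Sym2 V) ∧ idx e = i).card = G.degree v := by
          refine Eq.trans ?_ (G.card_incidenceFinset_eq_degree (v := v))
          refine Finset.card_bij
            (fun i hi => (((Finset.mem_filter.1 hi).2).choose : Sym2 V)) ?_ ?_ ?_
          · intro i hi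
            have hch := ((Finset.mem_filter.1 hi).2).choose_spec
            rw [SimpleGraph.mem_incidenceFinset]
            exact (SimpleGraph.edge_mem_incidenceSet_iff G).2 hch.1
          · intro i hi i' hi' hee
            have hch := ((Finset.mem_filter.1 hi).2).choose_spec
            have hch' := ((Finset.mem_filter.1 hi').2).choose_spec
            have : ((Finset.mem_filter.1 hi).2).choose = ((Finset.mem_filter.1 hi').2).choose :=
              Subtype.ext hee
            rw [← hch.2, ← hch'.2, this]
          · intro z hz
            rw [SimpleGraph.mem_incidenceFinset] at hz
            have hz1 : z ∈ G.edgeSet := hz.1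
            have hz2 : v ∈ z := hz.2
            set ez : G.edgeSet := ⟨z, hz1⟩ with hez
            have hmemf : idx ez ∈ Finset.univ.filter
                fun i => ∃ e : G.edgeSet, v ∈ (e : Sym2 V) ∧ idx e = i :=
              Finset.mem_filter.2 ⟨Finset.mem_univ _, ⟨ez, hz2, rfl⟩⟩
            refine ⟨idx ez, hmemf, ?_⟩
            have hch := ((Finset.mem_filter.1 hmemf).2).choose_spec
            have hvne : v ≠ s (idx ez) := fun h => hv (by rw [h]; exact hsmem _)
            have := huniq_e v (idx ez) ((Finset.mem_filter.1 hmemf).2).choose ez hvne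
              hch.1 hch.2 hz2 rfl
            show (((Finset.mem_filter.1 hmemf).2).choose : Sym2 V) = z
            exact congrArg Subtype.val this
        rw [hcards]
        simp [ftilde]
    · have heq : ∀ i, F i (Sum.inr e) = if idx e = i then 1 else 0 := fun i => hfinr i e
      simp only [heq]
      rw [Finset.sum_ite_eq]
      simp [ftilde]
  -- characterization of double intersections
  have hpair : ∀ (i j : Fin k) (ci cj : NNReal), i ≠ j → 0 < ci → 0 < cj →
      ∀ x ∈ {y | ci ≤ F i y} ∩ {y | cj ≤ F j y},
        ∃ v : V, x = Sum.inl v ∧ v ∉ S ∧ G.Adj v (s i) ∧ G.Adj v (s j) := by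
    intro i j ci cj hij hci hcj x hx
    obtain ⟨hxi, hxj⟩ := hx
    rcases x with v | e
    · rw [Set.mem_setOf_eq, hfinl] at hxi
      rw [Set.mem_setOf_eq, hfinl] at hxj
      by_cases hvi : v = s i
      · rw [if_neg (fun h : v = s j => hij (hsinj ((hvi.symm.trans h)))),
          if_pos (by rw [hvi]; exact hsmem i)] at hxj
        exact absurd (le_zero_iff.1 hxj) hcj.ne'
      · rw [if_neg hvi] at hxi
        by_cases hS : v ∈ S
        · rw [if_pos hS] at hxi
          exact absurd (le_zero_iff.1 hxi) hci.ne'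
        · rw [if_neg hS] at hxi
          have hvj : v ≠ s j := fun h => hS (by rw [h]; exact hsmem j)
          rw [if_neg hvj, if_neg hS] at hxj
          split_ifs at hxi with hex1
          · split_ifs at hxj with hex2
            · obtain ⟨e1, hv1, hi1⟩ := hex1
              obtain ⟨e2, hv2, hi2⟩ := hex2
              exact ⟨v, rfl, hS, hadj_of v i e1 hvi hv1 hi1, hadj_of v j e2 hvj hv2 hi2⟩
            · exact absurd (le_zero_iff.1 hxj) hcj.ne'
          · exact absurd (le_zero_iff.1 hxi) hci.ne'
    · rw [Set.mem_setOf_eq, hfinr] at hxi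
      rw [Set.mem_setOf_eq, hfinr] at hxj
      split_ifs at hxi with h1'
      · split_ifs at hxj with h2'
        · exact absurd (h1'.symm.trans h2') hij
        · exact absurd (le_zero_iff.1 hxj) hcj.ne'
      · exact absurd (le_zero_iff.1 hxi) hci.ne'
  -- double intersections are subsingletons (girth > 4)
  have hss : ∀ (i j : Fin k) (ci cj : NNReal), i ≠ j → 0 < ci → 0 < cj →
      ({y | ci ≤ F i y} ∩ {y | cj ≤ F j y}).Subsingleton := by
    intro i j ci cj hij hci hcj x hx y hy
    obtain ⟨v, rfl, hvS, havi, havj⟩ := hpair i j ci cj hij hci hcj x hx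
    obtain ⟨v', rfl, hv'S, hav'i, hav'j⟩ := hpair i j ci cj hij hci hcj y hy
    by_contra hne'
    have hvv' : v ≠ v' := fun h => hne' (by rw [h])
    have hsij : s i ≠ s j := fun h => hij (hsinj h)
    have h1 : G.Adj (s i) v := havi.symm
    have h2 : G.Adj v (s j) := havj
    have h3 : G.Adj (s j) v' := hav'j.symm
    have h4 : G.Adj v' (s i) := hav'i
    have hvsi : v ≠ s i := h1.ne'
    have hvsj : v ≠ s j := h2.ne
    have hv'si : v' ≠ s i := h4.ne
    have hv'sj : v' ≠ s j := h3.ne'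
    set p : G.Walk (s i) (s i) :=
      Walk.cons h1 (Walk.cons h2 (Walk.cons h3 (Walk.cons h4 Walk.nil))) with hp
    have hsiv : s i ≠ v := h1.ne
    have hsjv : s j ≠ v := h2.ne'
    have hsiv' : s i ≠ v' := h4.ne'
    have hsjv' : s j ≠ v' := h3.ne
    have hsji : s j ≠ s i := hsij.symm
    have hv'v : v' ≠ v := hvv'.symm
    have hcyc : p.IsCycle := by
      rw [hp, Walk.isCycle_def]
      refine ⟨?_, by simp, ?_⟩
      · rw [Walk.isTrail_def]
        simp only [Walk.edges_cons, Walk.edges_nil, List.nodup_cons, List.mem_cons,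
          List.mem_singleton, List.not_mem_nil, or_false, List.nodup_nil, and_true,
          not_or, Sym2.eq_iff]
        tauto
      · simp only [Walk.support_cons, Walk.support_nil, List.tail_cons, List.nodup_cons,
          List.mem_cons, List.mem_singleton, List.not_mem_nil, or_false, List.nodup_nil,
          and_true, not_or]
        tauto
    have hlt := hgirth (s i) p hcyc
    have hlen4 : p.length = 4 := by rw [hp]; simp
    rw [hlen4] at hlt
    exact lt_irrefl 4 hlt
  -- intersections over arbitrary finite families
  have hInter : ∀ I : Finset (Fin k), I.Nonempty → ∀ c : Fin k → NNReal,
      (∀ i ∈ I, 0 < c i) →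
      (⋂ i ∈ I, {v | c i ≤ F i v}) = ∅ ∨
        InducesTree (subdivGraph G) (⋂ i ∈ I, {v | c i ≤ F i v}) := by
    intro I hI c hc
    by_cases h1 : I.card = 1
    · obtain ⟨j, rfl⟩ := Finset.card_eq_one.1 h1
      have hbi : (⋂ i ∈ ({j} : Finset (Fin k)), {v | c i ≤ F i v}) = {v | c j ≤ F j v} := by
        simp
      rw [hbi]
      exact hUni j (c j) (hc j (Finset.mem_singleton_self j))
    · have h2 : 1 < I.card := by
        rcases hI with ⟨a, ha⟩
        have := Finset.card_pos.2 ⟨a, ha⟩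
        omega
      obtain ⟨i, hiI, j, hjI, hij⟩ := Finset.one_lt_card.1 h2
      have hsub : (⋂ l ∈ I, {v | c l ≤ F l v}) ⊆
          {y | c i ≤ F i y} ∩ {y | c j ≤ F j y} :=
        fun x hx => ⟨Set.mem_iInter₂.1 hx i hiI, Set.mem_iInter₂.1 hx j hjI⟩
      have hsing := (hss i j (c i) (c j) hij (hc i hiI) (hc j hjI)).anti hsub
      rcases Set.eq_empty_or_nonempty (⋂ l ∈ I, {v | c l ≤ F l v}) with he | hne'
      · exact Or.inl he
      · exact Or.inr (inducesTree_of_subsingleton _ _ hne' hsing)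
  exact ⟨F, hUni, hSum, hUni, hInter⟩
end

section
/- Let G = (V, E) be a finite simple graph, let G̃ be its subdivision graph, and let f̃ be the associated function. If there exist k unimodal functions f_1, …, f_k on G̃ with Σ_{i=1}^{k} f_i(x) = f̃(x) for every vertex x of G̃, then G has a vertex cover consisting of at most k vertices. -/
open SimpleGraph

/-- If a set is closed under adjacency, walks starting in it stay in it. -/
lemma walk_closed_aux {W : Type*} {H : SimpleGraph W} {D : Set W}
    (hD : ∀ a b, a ∈ D → H.Adj a b → b ∈ D) {a b : W} (p : H.Walk a b) :
    a ∈ D → b ∈ D := by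
  induction p with
  | nil => exact id
  | cons h p ih => exact fun ha => ih (hD _ _ ha h)

lemma exists_adj_of_reachable_aux {W : Type*} {H : SimpleGraph W} {a b : W}
    (h : H.Reachable a b) (hne : a ≠ b) : ∃ c, H.Adj a c := by
  obtain ⟨p⟩ := h
  cases p with
  | nil => exact absurd rfl hne
  | cons h _ => exact ⟨_, h⟩

lemma subdiv_adj_inl {V : Type*} {G : SimpleGraph V} {v : V} {y : V ⊕ G.edgeSet}
    (h : (subdivGraph G).Adj (Sum.inl v) y) :
    ∃ e : G.edgeSet, y = Sum.inr e ∧ v ∈ (e : Sym2 V) := by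
  cases y with
  | inl w => exact h.elim
  | inr e => exact ⟨e, rfl, h⟩

lemma subdiv_adj_inr {V : Type*} {G : SimpleGraph V} {e : G.edgeSet} {y : V ⊕ G.edgeSet}
    (h : (subdivGraph G).Adj (Sum.inr e) y) :
    ∃ v : V, y = Sum.inl v ∧ v ∈ (e : Sym2 V) := by
  cases y with
  | inl w => exact ⟨w, rfl, h⟩
  | inr e' => exact h.elim

/-- If the canonical function on the subdivision graph of `G` has a unimodal
decomposition into `k` components, then `G` has a vertex cover of at most `k` vertices. -/
theorem unimodal_decomposition_imp_vertexCover
    {V : Type*} [Fintype V] [DecidableEq V] (G : SimpleGraph V) [DecidableRel G.Adj]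
    (k : ℕ) (f : Fin k → (V ⊕ G.edgeSet) → NNReal)
    (hf : ∀ i, UnimodalOn (subdivGraph G) (f i))
    (hsum : ∀ x, ∑ i, f i x = ftilde G x) :
    ∃ S : Finset V, (∀ u w, G.Adj u w → u ∈ S ∨ w ∈ S) ∧ S.card ≤ k := by
  classical
  by_cases hV : Nonempty V
  swap
  · exact ⟨∅, fun u w h => absurd (Nonempty.intro u) hV, by simp⟩
  haveI := hV
  -- choose a maximizer of each `f i` over the original vertices
  have hmax : ∀ i : Fin k, ∃ v : V, ∀ x : V, f i (Sum.inl x) ≤ f i (Sum.inl v) := by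
    intro i
    obtain ⟨b, -, hb⟩ := Finset.exists_max_image Finset.univ
      (fun v => f i (Sum.inl v)) Finset.univ_nonempty
    exact ⟨b, fun x => hb x (Finset.mem_univ x)⟩
  choose s hs using hmax
  refine ⟨Finset.image s Finset.univ, ?_, Finset.card_image_le.trans (by simp)⟩
  intro u w huw
  by_contra hcov
  push_neg at hcov
  obtain ⟨hu, hw⟩ := hcov
  have hsu : ∀ i, s i ≠ u := fun i h => hu (h ▸ Finset.mem_image_of_mem s (Finset.mem_univ i))
  have hsw : ∀ i, s i ≠ w := fun i h => hw (h ▸ Finset.mem_image_of_mem s (Finset.mem_univ i))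
  set ee : G.edgeSet := ⟨s(u, w), huw⟩ with hee
  set I : V → Finset G.edgeSet :=
    fun v => Finset.univ.filter (fun e' => v ∈ (e' : Sym2 V)) with hI
  have hmemI : ∀ (v : V) (e' : G.edgeSet), e' ∈ I v ↔ v ∈ (e' : Sym2 V) := by
    intro v e'
    simp [hI]
  have heeu : ee ∈ I u := (hmemI u ee).2 (Sym2.mem_mk_left u w)
  have heew : ee ∈ I w := (hmemI w ee).2 (Sym2.mem_mk_right u w)
  -- cardinality of the incidence set
  have hcard : ∀ v : V, (I v).card = G.degree v := by
    intro v
    rw [← G.card_incidenceFinset_eq_degree]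
    refine Finset.card_bij (fun e _ => (e : Sym2 V)) ?_ ?_ ?_
    · intro a ha
      rw [SimpleGraph.mem_incidenceFinset]
      exact ⟨a.2, ((hmemI v a).1 ha)⟩
    · intro a _ b _ h
      exact Subtype.ext h
    · intro x hx
      rw [SimpleGraph.mem_incidenceFinset] at hx
      exact ⟨⟨x, hx.1⟩, (hmemI v _).2 hx.2, rfl⟩
  -- the global sum identity at a vertex
  have hvertex_sum : ∀ v : V,
      ∑ i, f i (Sum.inl v) = ∑ i, ∑ e' ∈ I v, f i (Sum.inr e') := by
    intro v
    rw [Finset.sum_comm]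
    calc ∑ i, f i (Sum.inl v) = (G.degree v : NNReal) := by rw [hsum (Sum.inl v)]; rfl
      _ = ((I v).card : NNReal) := by rw [hcard]
      _ = ∑ _e' ∈ I v, (1 : NNReal) := by simp
      _ = ∑ e' ∈ I v, ∑ i, f i (Sum.inr e') :=
        Finset.sum_congr rfl (fun e' _ => by rw [hsum (Sum.inr e')]; rfl)
  -- key equalities at a never-chosen endpoint
  have key : ∀ v : V, ee ∈ I v → (∀ i, s i ≠ v) → ∀ i : Fin k,
      f i (Sum.inl v) = ∑ e' ∈ I v, f i (Sum.inr e') ∧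
      (I v).sup (fun e' => f i (Sum.inr e')) = ∑ e' ∈ I v, f i (Sum.inr e') := by
    intro v hv hsv
    have hle1 : ∀ i, f i (Sum.inl v) ≤ (I v).sup (fun e' => f i (Sum.inr e')) := by
      intro i
      by_contra hcon
      push_neg at hcon
      have hpos : 0 < f i (Sum.inl v) := lt_of_le_of_lt (zero_le) hcon
      set T : Set (V ⊕ G.edgeSet) := {y | f i (Sum.inl v) ≤ f i y} with hT
      have hTv : Sum.inl v ∈ T := Set.mem_setOf.mpr le_rfl
      have htree : InducesTree (subdivGraph G) T := by
        rcases hf i _ hpos with h | h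
        · rw [hT] at hTv ⊢
          rw [h] at hTv
          exact absurd hTv (Set.notMem_empty _)
        · exact h
      have hxT : Sum.inl (s i) ∈ T := Set.mem_setOf.mpr (hs i v)
      have hne : (⟨Sum.inl v, hTv⟩ : T) ≠ ⟨Sum.inl (s i), hxT⟩ := by
        intro h
        apply hsv i
        have := congrArg Subtype.val h
        exact (Sum.inl.inj this).symm
      obtain ⟨z, hz⟩ := exists_adj_of_reachable_aux
        (htree.isConnected.preconnected ⟨Sum.inl v, hTv⟩ ⟨Sum.inl (s i), hxT⟩) hne
      have hz' : (subdivGraph G).Adj (Sum.inl v) z.val := hz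
      obtain ⟨e', he', hve'⟩ := subdiv_adj_inl hz'
      have hmem : e' ∈ I v := (hmemI v e').2 hve'
      have hTz : f i (Sum.inl v) ≤ f i (Sum.inr e') := by
        have := z.2
        rw [he'] at this
        exact this
      exact absurd (hTz.trans (Finset.le_sup (f := fun e' => f i (Sum.inr e')) hmem))
        (not_le.2 hcon)
    have hle2 : ∀ i, (I v).sup (fun e' => f i (Sum.inr e')) ≤ ∑ e' ∈ I v, f i (Sum.inr e') :=
      fun i => Finset.sup_le (fun e' he' =>
        Finset.single_le_sum (f := fun e'' => f i (Sum.inr e'')) (fun _ _ => zero_le) he')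
    have h1 : ∀ i ∈ Finset.univ, f i (Sum.inl v) = ∑ e' ∈ I v, f i (Sum.inr e') :=
      (Finset.sum_eq_sum_iff_of_le (fun i _ => (hle1 i).trans (hle2 i))).1 (hvertex_sum v)
    intro i
    refine ⟨h1 i (Finset.mem_univ i), le_antisymm (hle2 i) ?_⟩
    rw [← h1 i (Finset.mem_univ i)]
    exact hle1 i
  -- choose a component with positive mass on the midpoint of `ee`
  obtain ⟨i, hi⟩ : ∃ i, f i (Sum.inr ee) ≠ 0 := by
    by_contra hc
    push_neg at hc
    have h0 : ∑ i, f i (Sum.inr ee) = 0 := Finset.sum_eq_zero (fun i _ => hc i)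
    rw [hsum (Sum.inr ee)] at h0
    exact one_ne_zero h0
  -- all other midpoints around u and around w vanish for `i`
  have hz : ∀ v : V, ee ∈ I v → (∀ j, s j ≠ v) →
      ∀ e' ∈ I v, e' ≠ ee → f i (Sum.inr e') = 0 := by
    intro v hv hsv e' he' hne
    obtain ⟨estar, hestar, hsupeq⟩ := Finset.exists_mem_eq_sup (I v) ⟨ee, hv⟩
      (fun e'' => f i (Sum.inr e''))
    have hse := (key v hv hsv i).2
    have hallz : ∀ b ∈ I v, b ≠ estar → f i (Sum.inr b) = 0 := by
      intro b hb hbne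
      have hsub : ({estar, b} : Finset G.edgeSet) ⊆ I v :=
        Finset.insert_subset hestar (Finset.singleton_subset_iff.2 hb)
      have hpair := Finset.sum_le_sum_of_subset
        (f := fun e'' => f i (Sum.inr e'')) hsub
      rw [Finset.sum_pair (Ne.symm hbne)] at hpair
      rw [← hse.symm.trans hsupeq] at hpair
      have hb0 : f i (Sum.inr b) ≤ 0 := (add_le_iff_nonpos_right _).1 hpair
      exact le_antisymm hb0 (zero_le)
    have heq : estar = ee := by
      by_contra hc
      exact hi (hallz ee hv (fun h => hc h.symm))
    exact hallz e' he' (heq ▸ hne)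
  -- values at u and w equal the value at the midpoint
  have hval : ∀ v : V, ee ∈ I v → (∀ j, s j ≠ v) →
      f i (Sum.inl v) = f i (Sum.inr ee) := by
    intro v hv hsv
    rw [(key v hv hsv i).1]
    exact Finset.sum_eq_single_of_mem ee hv (fun b hb hbne => hz v hv hsv b hb hbne)
  have hvalu := hval u heeu hsu
  have hvalw := hval w heew hsw
  -- final connectivity argument
  set c := f i (Sum.inr ee) with hc
  have hcpos : 0 < c := pos_iff_ne_zero.2 hi
  set T : Set (V ⊕ G.edgeSet) := {y | c ≤ f i y} with hT
  have hTu : Sum.inl u ∈ T := le_of_eq hvalu.symm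
  have hTx : Sum.inl (s i) ∈ T := le_trans (le_of_eq hvalu.symm) (hs i u)
  have htree : InducesTree (subdivGraph G) T := by
    rcases hf i _ hcpos with h | h
    · rw [hT] at hTu ⊢
      rw [h] at hTu
      exact absurd hTu (Set.notMem_empty _)
    · exact h
  have hclosed : ∀ x y : V ⊕ G.edgeSet,
      (x = Sum.inl u ∨ x = Sum.inl w ∨ x = Sum.inr ee) → y ∈ T →
      (subdivGraph G).Adj x y → (y = Sum.inl u ∨ y = Sum.inl w ∨ y = Sum.inr ee) := by
    intro x y hx hyT hadj
    rcases hx with rfl | rfl | rfl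
    · obtain ⟨e', rfl, hve'⟩ := subdiv_adj_inl hadj
      right; right
      have heq : e' = ee := by
        by_contra hne
        have h0 := hz u heeu hsu e' ((hmemI u e').2 hve') hne
        have hcle : c ≤ f i (Sum.inr e') := hyT
        rw [h0] at hcle
        exact absurd hcle (not_le.2 hcpos)
      rw [heq]
    · obtain ⟨e', rfl, hve'⟩ := subdiv_adj_inl hadj
      right; right
      have heq : e' = ee := by
        by_contra hne
        have h0 := hz w heew hsw e' ((hmemI w e').2 hve') hne
        have hcle : c ≤ f i (Sum.inr e') := hyT
        rw [h0] at hcle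
        exact absurd hcle (not_le.2 hcpos)
      rw [heq]
    · obtain ⟨v', rfl, hvee⟩ := subdiv_adj_inr hadj
      have hvee' : v' ∈ s(u, w) := by rw [hee] at hvee; exact hvee
      rcases Sym2.mem_iff.1 hvee' with rfl | rfl
      · left; rfl
      · right; left; rfl
  obtain ⟨p⟩ := htree.isConnected.preconnected ⟨Sum.inl u, hTu⟩ ⟨Sum.inl (s i), hTx⟩
  have hxD := walk_closed_aux (H := (subdivGraph G).induce T)
      (D := {z : ↥T | z.val = Sum.inl u ∨ z.val = Sum.inl w ∨ z.val = Sum.inr ee})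
      (fun a b ha hadj => hclosed a.val b.val ha b.2 hadj) p (Or.inl rfl)
  have hxD' : (Sum.inl (s i) : V ⊕ G.edgeSet) = Sum.inl u ∨
      (Sum.inl (s i) : V ⊕ G.edgeSet) = Sum.inl w ∨
      (Sum.inl (s i) : V ⊕ G.edgeSet) = Sum.inr ee := hxD
  rcases hxD' with h | h | h
  · exact hsu i (Sum.inl.inj h)
  · exact hsw i (Sum.inl.inj h)
  · exact Sum.inl_ne_inr h
end

section
/- Let G = (V, E) be a finite simple graph, let G̃ be its subdivision graph with associated function f̃, and let F = {f_1, …, f_k} be unimodal functions on G̃ with Σ_{i=1}^{k} f_i = f̃. Let v ∈ V be a vertex with deg_G(v) ≥ 1 that is not a mode of any function in F, and for each edge e of G incident to v let F^v_e = {f ∈ F | f(m_e) ≥ f(v) and f(v) ≥ f(m_{e'}) for every other edge e' of G incident to v}. Then for every edge e incident to v and every f ∈ F^v_e, one has f(m_{e'}) = 0 for every edge e' ≠ e of G incident to v. -/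
open SimpleGraph

/-- The family `F^v_e`: indices of those components whose value at the midpoint of `e` is
at least the value at `v`, and whose value at `v` is at least the value at the midpoint of
every other edge incident to `v`. -/
def Fve {V : Type*} (G : SimpleGraph V) {k : ℕ} (f : Fin k → (V ⊕ G.edgeSet) → NNReal)
    (v : V) (e : G.edgeSet) : Set (Fin k) :=
  {i | f i (Sum.inl v) ≤ f i (Sum.inr e) ∧
    ∀ e2 : G.edgeSet, v ∈ (e2 : Sym2 V) → e2 ≠ e → f i (Sum.inr e2) ≤ f i (Sum.inl v)}

/-- If `v` is a vertex of positive degree that is not a mode of any component of a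
unimodal decomposition of the canonical function on the subdivision graph, then every
component in `F^v_e` vanishes at the midpoint of every other edge incident to `v`. -/
theorem modeless_vertex_components_vanish_on_other_edges
    {V : Type*} [Fintype V] [DecidableEq V] (G : SimpleGraph V) [DecidableRel G.Adj]
    (k : ℕ) (f : Fin k → (V ⊕ G.edgeSet) → NNReal)
    (hf : ∀ i, UnimodalOn (subdivGraph G) (f i))
    (hsum : ∀ x, ∑ i, f i x = ftilde G x)
    (v : V) (hdeg : 1 ≤ G.degree v)
    (hmode : ∀ i, ¬ ∀ y, f i y ≤ f i (Sum.inl v)) :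
    ∀ e : G.edgeSet, v ∈ (e : Sym2 V) → ∀ i ∈ Fve G f v e,
      ∀ e2 : G.edgeSet, v ∈ (e2 : Sym2 V) → e2 ≠ e → f i (Sum.inr e2) = 0 := by
  classical
  intro e he i hi e2 he2 hne
  set E : Finset G.edgeSet := Finset.univ.filter (fun e' : G.edgeSet => v ∈ (e' : Sym2 V))
    with hE
  have hcard : E.card = G.degree v := by
    rw [← card_incidenceFinset_eq_degree (G := G) (v := v)]
    apply Finset.card_bij (fun (e' : G.edgeSet) (_ : e' ∈ E) => (e' : Sym2 V))
    · intro a ha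
      rw [mem_incidenceFinset]
      exact ⟨a.2, by simpa [hE] using ha⟩
    · intro a _ b _ h
      exact Subtype.ext h
    · intro b hb
      rw [mem_incidenceFinset] at hb
      exact ⟨⟨b, hb.1⟩, by simp [hE, hb.2], rfl⟩
  -- Step 1: each component's value at `v` is at most its total over incident midpoints.
  have key : ∀ j, f j (Sum.inl v) ≤ ∑ e' ∈ E, f j (Sum.inr e') := by
    intro j
    rcases eq_or_lt_of_le (zero_le : (0 : NNReal) ≤ f j (Sum.inl v)) with h0 | hpos
    · rw [← h0]; exact zero_le
    obtain ⟨z, hz⟩ := not_forall.mp (hmode j)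
    have hz' : f j (Sum.inl v) < f j z := lt_of_not_ge hz
    rcases hf j (f j (Sum.inl v)) hpos with hemp | htree
    · exfalso
      have : Sum.inl v ∈ ({x | f j (Sum.inl v) ≤ f j x} : Set (V ⊕ G.edgeSet)) :=
        Set.mem_setOf_eq.mpr le_rfl
      rw [hemp] at this
      exact this
    · have hvS : (Sum.inl v : V ⊕ G.edgeSet) ∈ {x | f j (Sum.inl v) ≤ f j x} :=
        Set.mem_setOf_eq.mpr le_rfl
      have hzS : z ∈ ({x | f j (Sum.inl v) ≤ f j x} : Set (V ⊕ G.edgeSet)) := le_of_lt hz'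
      obtain ⟨w⟩ := htree.isConnected.preconnected ⟨Sum.inl v, hvS⟩ ⟨z, hzS⟩
      have hnil : ¬ w.Nil := by
        apply SimpleGraph.Walk.not_nil_of_ne
        intro h
        have : (Sum.inl v : V ⊕ G.edgeSet) = z := congrArg Subtype.val h
        rw [← this] at hz'
        exact lt_irrefl _ hz'
      have hadj := SimpleGraph.Walk.adj_snd hnil
      set y := w.getVert 1 with hy
      have hadj' : (subdivGraph G).Adj (Sum.inl v) y.val := hadj
      obtain ⟨(u | e0), hyS⟩ := y
      · exact absurd hadj' (by simp [subdivGraph])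
      · have he0 : e0 ∈ E := by
          simp only [hE, Finset.mem_filter, Finset.mem_univ, true_and]
          exact hadj'
        calc f j (Sum.inl v) ≤ f j (Sum.inr e0) := hyS
          _ ≤ ∑ e' ∈ E, f j (Sum.inr e') :=
            Finset.single_le_sum (f := fun e' => f j (Sum.inr e'))
              (fun _ _ => zero_le) he0
  -- Step 2: totals agree, so each inequality is an equality.
  have hsum1 : ∑ j, ∑ e' ∈ E, f j (Sum.inr e') = ∑ j, f j (Sum.inl v) := by
    rw [Finset.sum_comm]
    calc ∑ e' ∈ E, ∑ j, f j (Sum.inr e') = ∑ e' ∈ E, (1 : NNReal) := by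
          refine Finset.sum_congr rfl fun e' _ => ?_
          exact hsum (Sum.inr e')
      _ = (E.card : NNReal) := by simp
      _ = ((G.degree v : ℕ) : NNReal) := by rw [hcard]
      _ = ∑ j, f j (Sum.inl v) := (hsum (Sum.inl v)).symm
  have heq : ∀ j, f j (Sum.inl v) = ∑ e' ∈ E, f j (Sum.inr e') :=
    fun j => (Finset.sum_eq_sum_iff_of_le (fun i _ => key i)).mp hsum1.symm j
      (Finset.mem_univ j)
  -- Step 3: conclude.
  have heE : e ∈ E := by simp [hE, he]
  have he2E : e2 ∈ E := by simp [hE, he2]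
  have hpair : f i (Sum.inr e) + f i (Sum.inr e2) ≤ ∑ e' ∈ E, f i (Sum.inr e') := by
    have hsub : ({e, e2} : Finset G.edgeSet) ⊆ E := by
      intro x hx
      rcases Finset.mem_insert.mp hx with h | h
      · rwa [h]
      · rw [Finset.mem_singleton.mp h]; exact he2E
    calc f i (Sum.inr e) + f i (Sum.inr e2)
        = ∑ e' ∈ ({e, e2} : Finset G.edgeSet), f i (Sum.inr e') :=
          (Finset.sum_pair (f := fun e' => f i (Sum.inr e')) (Ne.symm hne)).symm
      _ ≤ ∑ e' ∈ E, f i (Sum.inr e') :=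
          Finset.sum_le_sum_of_subset hsub
  have h1 : f i (Sum.inl v) + f i (Sum.inr e2) ≤ f i (Sum.inl v) + 0 := by
    rw [add_zero]
    calc f i (Sum.inl v) + f i (Sum.inr e2)
        ≤ f i (Sum.inr e) + f i (Sum.inr e2) := add_le_add_left hi.1 _
      _ ≤ ∑ e' ∈ E, f i (Sum.inr e') := hpair
      _ = f i (Sum.inl v) := (heq i).symm
  exact le_antisymm (le_of_add_le_add_left h1) zero_le
end
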